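/- arXiv:1711.01951 — 6 statements merged into one kernel-verified Lean document; each statement's English description precedes it below -/
import Mathlib

section
/- If S is a locating-dominating set of a graph G, then S is a locating-dominating set of the complement Ḡ if and only if S is a dominating set of Ḡ. -/
noncomputable section
open Classical

variable {V : Type*}

/-- `S` is a distinguishing set of `G`. -/
def IsDistinguishing (G : SimpleGraph V) (S : Set V) : Prop :=
  ∀ u ∉ S, ∀ v ∉ S, u ≠ v → G.neighborSet u ∩ S ≠ G.neighborSet v ∩ S

/-- `S` is a dominating set of `G`. -/
def IsDominating (G : SimpleGraph V) (S : Set V) : Prop :=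
  ∀ v ∉ S, ∃ u ∈ S, G.Adj v u

/-- `S` is a locating-dominating set of `G`. -/
def IsLD (G : SimpleGraph V) (S : Set V) : Prop :=
  IsDistinguishing G S ∧ IsDominating G S

/-- The location-domination number of `G`. -/
def ldNum (G : SimpleGraph V) : ℕ :=
  sInf {n | ∃ S : Set V, S.ncard = n ∧ IsLD G S}

/-- The graph `G^S` associated with a distinguishing set `S`:
vertices outside `S` are adjacent iff their neighborhoods in `S`
differ in exactly one vertex (the label of the edge). -/
def assocGraph (G : SimpleGraph V) (S : Set V) : SimpleGraph V where
  Adj x y := x ∉ S ∧ y ∉ S ∧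
    ∃ u, symmDiff (G.neighborSet x ∩ S) (G.neighborSet y ∩ S) = {u}
  symm := by
    constructor
    rintro x y ⟨hx, hy, u, hu⟩
    exact ⟨hy, hx, u, by rwa [symmDiff_comm]⟩
  loopless := by
    constructor
    rintro x ⟨-, -, u, hu⟩
    rw [symmDiff_self] at hu
    exact (Set.singleton_ne_empty u) (by simpa using hu.symm)

/-- The edge `e` of `G^S` has label `u`. -/
def edgeLabelIs (G : SimpleGraph V) (S : Set V) (u : V) (e : Sym2 V) : Prop :=
  Sym2.lift ⟨fun x y => symmDiff (G.neighborSet x ∩ S) (G.neighborSet y ∩ S) = {u},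
    fun x y => by simp only []; rw [symmDiff_comm]⟩ e

/-- The number of edges with label `u` in a list of edges (e.g. of a walk in `G^S`). -/
def labelCount (G : SimpleGraph V) (S : Set V) (u : V) (l : List (Sym2 V)) : ℕ :=
  l.countP fun e => decide (edgeLabelIs G S u e)

/-- No edge of `H` lies on two distinct cycles: any two cycles sharing an edge
have the same edge set.  (This says precisely that every connected component of
`H` is a cactus.) -/
def NoEdgeOnTwoCycles {α : Type*} (H : SimpleGraph α) : Prop :=
  ∀ (x y : α) (p : H.Walk x x) (q : H.Walk y y), p.IsCycle → q.IsCycle →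
    ∀ e ∈ p.edges, e ∈ q.edges → ∀ e', e' ∈ p.edges ↔ e' ∈ q.edges

/-- A cactus is a connected graph in which no edge lies on two distinct cycles. -/
def IsCactus {α : Type*} (H : SimpleGraph α) : Prop :=
  H.Connected ∧ NoEdgeOnTwoCycles H

/-- `x` and `y` are twins in `G`. -/
def Twins (G : SimpleGraph V) (x y : V) : Prop :=
  G.neighborSet x = G.neighborSet y ∨
    G.neighborSet x ∪ {x} = G.neighborSet y ∪ {y}

/-- `x` and `y` are twins in the vertex-deleted graph `G - u`. -/
def TwinsAvoid (G : SimpleGraph V) (u x y : V) : Prop :=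
  G.neighborSet x \ {u} = G.neighborSet y \ {u} ∨
    (G.neighborSet x ∪ {x}) \ {u} = (G.neighborSet y ∪ {y}) \ {u}

/-- `U, W` is a bipartition of `G` into two stable (independent) sets. -/
def BipartitionOf (G : SimpleGraph V) (U W : Set V) : Prop :=
  U ∪ W = Set.univ ∧ Disjoint U W ∧
    (∀ x ∈ U, ∀ y ∈ U, ¬ G.Adj x y) ∧ (∀ x ∈ W, ∀ y ∈ W, ¬ G.Adj x y)

theorem ld_compl_iff_dominating_compl (G : SimpleGraph V) (S : Set V)
    (h : IsLD G S) : IsLD Gᶜ S ↔ IsDominating Gᶜ S := by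
  constructor
  · exact fun hld => hld.2
  · intro hdom
    refine ⟨?_, hdom⟩
    intro u hu v hv huv heq
    apply h.1 u hu v hv huv
    ext w
    simp only [Set.mem_inter_iff, SimpleGraph.mem_neighborSet]
    constructor
    · rintro ⟨hadj, hwS⟩
      refine ⟨?_, hwS⟩
      by_contra hnadj
      have hvw : v ≠ w := fun e => hv (e ▸ hwS)
      have : w ∈ Gᶜ.neighborSet v ∩ S := ⟨⟨hvw, hnadj⟩, hwS⟩
      rw [← heq] at this
      exact this.1.2 hadj
    · rintro ⟨hadj, hwS⟩
      refine ⟨?_, hwS⟩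
      by_contra hnadj
      have huw : u ≠ w := fun e => hu (e ▸ hwS)
      have : w ∈ Gᶜ.neighborSet u ∩ S := ⟨⟨huw, hnadj⟩, hwS⟩
      rw [heq] at this
      exact this.1.2 hadj

end
end

section
/- If S is a locating-dominating set of a graph G, then S is a locating-dominating set of the complement Ḡ if and only if there is no vertex u ∈ V \ S with N(u) ∩ S = S. -/
noncomputable section
open Classical

variable {V : Type*}

lemma compl_nbhd_inter (G : SimpleGraph V) (S : Set V) {u : V} (hu : u ∉ S) :
    Gᶜ.neighborSet u ∩ S = S \ (G.neighborSet u ∩ S) := by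
  ext v
  simp only [Set.mem_inter_iff, SimpleGraph.mem_neighborSet, SimpleGraph.compl_adj,
    Set.mem_diff, not_and]
  constructor
  · rintro ⟨⟨hne, hnadj⟩, hvS⟩
    exact ⟨hvS, fun hadj _ => hnadj hadj⟩
  · rintro ⟨hvS, hn⟩
    exact ⟨⟨fun h' => hu (h' ▸ hvS), fun hadj => hn hadj hvS⟩, hvS⟩

theorem ld_compl_iff_no_full_vertex (G : SimpleGraph V) (S : Set V)
    (h : IsLD G S) :
    IsLD Gᶜ S ↔ ∀ u ∉ S, G.neighborSet u ∩ S ≠ S := by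
  constructor
  · rintro ⟨hd, hdom⟩ u hu hfull
    obtain ⟨v, hvS, hadj⟩ := hdom u hu
    rw [SimpleGraph.compl_adj] at hadj
    have : v ∈ G.neighborSet u ∩ S := by rw [hfull]; exact hvS
    exact hadj.2 this.1
  · intro hfull
    constructor
    · intro u hu v hv huv heq
      apply h.1 u hu v hv huv
      rw [compl_nbhd_inter G S hu, compl_nbhd_inter G S hv] at heq
      have h1 : S \ (S \ (G.neighborSet u ∩ S)) = G.neighborSet u ∩ S :=
        Set.diff_diff_cancel_left Set.inter_subset_right
      have h2 : S \ (S \ (G.neighborSet v ∩ S)) = G.neighborSet v ∩ S :=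
        Set.diff_diff_cancel_left Set.inter_subset_right
      rw [← h1, ← h2, heq]
    · intro u hu
      have hne := hfull u hu
      have hss : G.neighborSet u ∩ S ⊆ S := Set.inter_subset_right
      obtain ⟨v, hvS, hvn⟩ := Set.exists_of_ssubset (hss.ssubset_of_ne hne)
      refine ⟨v, hvS, ?_⟩
      rw [SimpleGraph.compl_adj]
      exact ⟨fun h' => hu (h' ▸ hvS), fun hadj => hvn ⟨hadj, hvS⟩⟩

end
end

section
/- Let S be a distinguishing set of a graph G and let ρ be a walk in the associated graph G^S with no repeated edges. If for every v ∈ S the walk ρ traverses an even number of edges labeled v, then ρ is a closed walk (its endpoints coincide). -/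
noncomputable section
open Classical

variable {V : Type*}

private lemma parity_lemma (G : SimpleGraph V) (S : Set V) {x y : V}
    (p : (assocGraph G S).Walk x y) (v : V) :
    ((v ∈ G.neighborSet x ∩ S) ↔ (v ∈ G.neighborSet y ∩ S)) ↔
      Even (labelCount G S v p.edges) := by
  induction p with
  | nil => simp [labelCount]
  | @cons a b c h q ih =>
    obtain ⟨ha, hb, u, hu⟩ := id h
    have hedge : edgeLabelIs G S v s(a, b) ↔ v = u := by
      simp only [edgeLabelIs, Sym2.lift_mk]
      constructor
      · intro hv
        rw [hv] at hu
        exact Set.singleton_eq_singleton_iff.mp hu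
      · rintro rfl; exact hu
    have hmem : ((v ∈ G.neighborSet a ∩ S) ↔ (v ∈ G.neighborSet b ∩ S)) ↔ v ≠ u := by
      have h1 : v ∈ symmDiff (G.neighborSet a ∩ S) (G.neighborSet b ∩ S) ↔ v = u := by
        rw [hu]; simp
      rw [Set.mem_symmDiff] at h1
      constructor
      · intro hiff hvu
        rcases h1.mpr hvu with ⟨h2, h3⟩ | ⟨h2, h3⟩
        · exact h3 (hiff.mp h2)
        · exact h3 (hiff.mpr h2)
      · intro hne
        constructor
        · intro hva
          by_contra hvb
          exact hne (h1.mp (Or.inl ⟨hva, hvb⟩))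
        · intro hvb
          by_contra hva
          exact hne (h1.mp (Or.inr ⟨hvb, hva⟩))
    have hcount : labelCount G S v (SimpleGraph.Walk.cons h q).edges =
        labelCount G S v q.edges + (if v = u then 1 else 0) := by
      simp only [SimpleGraph.Walk.edges_cons, labelCount, List.countP_cons]
      by_cases hvu : v = u
      · have hd : decide (edgeLabelIs G S v s(a, b)) = true :=
          decide_eq_true (hedge.mpr hvu)
        simp [hd, hvu]
        exact hvu ▸ hedge.mpr hvu
      · have hd : decide (edgeLabelIs G S v s(a, b)) = false :=
          decide_eq_false (fun h' => hvu (hedge.mp h'))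
        simp [hd, hvu]
    by_cases hvu : v = u
    · subst hvu
      rw [hcount, if_pos rfl, Nat.even_add_one, ← ih]
      tauto
    · rw [hcount, if_neg hvu, Nat.add_zero, ← ih]
      have := hmem.mpr hvu
      tauto

private lemma endpoint_not_mem (G : SimpleGraph V) (S : Set V) {x y : V}
    (p : (assocGraph G S).Walk x y) (hxy : x ≠ y) : y ∉ S := by
  induction p with
  | nil => exact absurd rfl hxy
  | @cons a b c h q ih =>
    by_cases hbc : b = c
    · subst hbc; exact h.2.1
    · exact ih hbc

theorem trail_even_labels_closed (G : SimpleGraph V) (S : Set V)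
    (h : IsDistinguishing G S) (x y : V)
    (p : (assocGraph G S).Walk x y) (hp : p.IsTrail)
    (heven : ∀ v ∈ S, Even (labelCount G S v p.edges)) :
    x = y := by
  by_contra hxy
  have hy : y ∉ S := endpoint_not_mem G S p hxy
  have hx : x ∉ S := endpoint_not_mem G S p.reverse (Ne.symm hxy)
  apply h x hx y hy hxy
  ext v
  by_cases hv : v ∈ S
  · exact (parity_lemma G S p v).mpr (heven v hv)
  · constructor
    · rintro ⟨-, h2⟩; exact absurd h2 hv
    · rintro ⟨-, h2⟩; exact absurd h2 hv

end
end

section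
/- Let G be a connected bipartite graph with stable sets U and W. If G has a locating-dominating set S of minimum size with S ∩ U ≠ ∅ and S ∩ W ≠ ∅, then λ(Ḡ) ≤ λ(G). -/
noncomputable section
open Classical

variable {V : Type*}

theorem ld_code_both_parts [Fintype V] (G : SimpleGraph V) (U W : Set V)
    (hbip : BipartitionOf G U W) (hconn : G.Connected) (S : Set V)
    (hld : IsLD G S) (hmin : S.ncard = ldNum G)
    (hU : (S ∩ U).Nonempty) (hW : (S ∩ W).Nonempty) :
    ldNum Gᶜ ≤ ldNum G := by
  obtain ⟨hcov, hdisj, hUind, hWind⟩ := hbip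
  have hLDc : IsLD Gᶜ S := by
    constructor
    · intro u hu v hv huv heq
      apply hld.1 u hu v hv huv
      have key : ∀ x, x ∉ S → Gᶜ.neighborSet x ∩ S = S \ (G.neighborSet x ∩ S) := by
        intro x hx
        ext y
        simp only [SimpleGraph.neighborSet, SimpleGraph.compl_adj, Set.mem_inter_iff,
          Set.mem_setOf_eq, Set.mem_diff]
        constructor
        · rintro ⟨⟨hne, hnadj⟩, hy⟩; exact ⟨hy, fun h => hnadj h.1⟩
        · rintro ⟨hy, h⟩
          exact ⟨⟨fun hxy => hx (hxy ▸ hy), fun ha => h ⟨ha, hy⟩⟩, hy⟩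
      rw [key u hu, key v hv] at heq
      have hus : G.neighborSet u ∩ S ⊆ S := Set.inter_subset_right
      have hvs : G.neighborSet v ∩ S ⊆ S := Set.inter_subset_right
      rw [← Set.diff_diff_cancel_left hus, ← Set.diff_diff_cancel_left hvs, heq]
    · intro v hv
      have hvU : v ∈ U ∨ v ∈ W := by
        have : v ∈ U ∪ W := hcov ▸ Set.mem_univ v
        exact this
      rcases hvU with hvU | hvW
      · obtain ⟨s, hsS, hsU⟩ := hU
        refine ⟨s, hsS, ?_, fun h => hUind v hvU s hsU h⟩
        intro h; exact hv (h ▸ hsS)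
      · obtain ⟨s, hsS, hsW⟩ := hW
        refine ⟨s, hsS, ?_, fun h => hWind v hvW s hsW h⟩
        intro h; exact hv (h ▸ hsS)
  calc ldNum Gᶜ ≤ S.ncard := Nat.sInf_le ⟨S, rfl, hLDc⟩
    _ = ldNum G := hmin

end
end

section
/- Let G be a connected bipartite graph with parts U and W where |U| = r, |W| = s, and 2^r ≤ s. Then λ(Ḡ) ≤ λ(G). -/
noncomputable section
open Classical

variable {V : Type*}

lemma sq_lt_two_pow_succ (m : ℕ) : m * m < 2 ^ (m + 1) := by
  induction m with
  | zero => simp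
  | succ n ih =>
    have h1 : n + 1 ≤ 2 ^ n := Nat.lt_two_pow_self (n := n)
    have h2 : 2 ^ (n + 1 + 1) = 2 ^ (n + 1) + 2 ^ n + 2 ^ n := by ring
    nlinarith [ih, h1]

lemma compl_trace (G : SimpleGraph V) (S : Set V) (u : V) (hu : u ∉ S) :
    Gᶜ.neighborSet u ∩ S = S \ (G.neighborSet u ∩ S) := by
  ext x
  simp only [Set.mem_inter_iff, SimpleGraph.mem_neighborSet, SimpleGraph.compl_adj,
    Set.mem_diff, not_and]
  constructor
  · rintro ⟨⟨_, h2⟩, hx⟩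
    exact ⟨hx, fun h _ => h2 h⟩
  · rintro ⟨hx, h⟩
    exact ⟨⟨fun he => hu (he ▸ hx), fun ha => h ha hx⟩, hx⟩

lemma dist_compl {G : SimpleGraph V} {S : Set V} (h : IsDistinguishing G S) :
    IsDistinguishing Gᶜ S := by
  intro u hu v hv huv heq
  apply h u hu v hv huv
  rw [compl_trace G S u hu, compl_trace G S v hv] at heq
  have hA : G.neighborSet u ∩ S ⊆ S := Set.inter_subset_right
  have hB : G.neighborSet v ∩ S ⊆ S := Set.inter_subset_right
  rw [← Set.diff_diff_cancel_left hA, ← Set.diff_diff_cancel_left hB, heq]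

theorem ldNum_compl_le_of_pow_le [Fintype V] (G : SimpleGraph V) (U W : Set V)
    (hbip : BipartitionOf G U W) (hconn : G.Connected) (r s : ℕ)
    (hU : U.ncard = r) (hW : W.ncard = s) (hpow : 2 ^ r ≤ s) :
    ldNum Gᶜ ≤ ldNum G := by
  classical
  obtain ⟨hcov, hdisj, hUind, hWind⟩ := hbip
  have hne : {n | ∃ S : Set V, S.ncard = n ∧ IsLD G S}.Nonempty :=
    ⟨(Set.univ : Set V).ncard, Set.univ, rfl,
      fun u hu => absurd (Set.mem_univ u) hu,
      fun v hv => absurd (Set.mem_univ v) hv⟩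
  have hmem := Nat.sInf_mem hne
  rw [Set.mem_setOf_eq] at hmem
  obtain ⟨S, hScard, hdist, hdom⟩ := hmem
  simp only [ldNum] at hScard ⊢
  by_cases hdomc : IsDominating Gᶜ S
  · exact Nat.sInf_le ⟨S, hScard, dist_compl hdist, hdomc⟩
  · simp only [IsDominating] at hdomc
    push_neg at hdomc
    obtain ⟨v0, hv0S, hv0⟩ := hdomc
    have hSN : ∀ u ∈ S, G.Adj v0 u := by
      intro u huS
      by_contra h
      exact hv0 u huS ((SimpleGraph.compl_adj G v0 u).mpr ⟨fun he => hv0S (he ▸ huS), h⟩)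
    have hmemUW : ∀ x : V, x ∈ U ∨ x ∈ W := by
      intro x
      have : x ∈ U ∪ W := by rw [hcov]; exact Set.mem_univ x
      exact this
    have hNU : ∀ u ∈ U, G.neighborSet u ⊆ W := by
      intro u hu x hx
      rcases hmemUW x with h | h
      · exact absurd hx (hUind u hu x h)
      · exact h
    rcases hmemUW v0 with hv0U | hv0W
    · -- case v0 ∈ U : then S = W; swap a well-chosen w0 for v0
      have hSsubW : S ⊆ W := by
        intro u huS
        rcases hmemUW u with h | h
        · exact absurd (hSN u huS) (hUind v0 hv0U u h)
        · exact h
      have hSW : S = W := by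
        apply Set.Subset.antisymm hSsubW
        intro w hwW
        by_contra hwS
        obtain ⟨u, huS, hadj⟩ := hdom w hwS
        exact hWind w hwW u (hSsubW huS) hadj
      have hUnS : ∀ x ∈ U, x ∉ S := fun x hx hxS =>
        Set.disjoint_left.mp hdisj hx (hSW ▸ hxS)
      have hNdist : ∀ x ∈ U, ∀ y ∈ U, x ≠ y → G.neighborSet x ≠ G.neighborSet y := by
        intro x hx y hy hxy he
        exact hdist x (hUnS x hx) y (hUnS y hy) hxy (by rw [he])
      set U' : Set V := U \ {v0} with hU'
      set B : Set V := {w : V | ∃ p : V × V, p ∈ U' ×ˢ U' ∧ p.1 ≠ p.2 ∧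
        G.neighborSet p.1 \ {w} = G.neighborSet p.2 \ {w}} with hB
      have hgex : ∀ w ∈ B, ∃ p : V × V, p ∈ U' ×ˢ U' ∧ p.1 ≠ p.2 ∧
          G.neighborSet p.1 \ {w} = G.neighborSet p.2 \ {w} := fun w hw => hw
      set g : V → V × V := fun w =>
        if h : w ∈ B then (hgex w h).choose else (v0, v0) with hg
      have hgspec : ∀ w (hw : w ∈ B), g w ∈ U' ×ˢ U' ∧ (g w).1 ≠ (g w).2 ∧
          G.neighborSet (g w).1 \ {w} = G.neighborSet (g w).2 \ {w} := by
        intro w hw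
        simp only [hg, dif_pos hw]
        exact (hgex w hw).choose_spec
      have hginj : Set.InjOn g B := by
        intro w1 h1 w2 h2 he
        by_contra hne
        obtain ⟨hp1, hne1, heq1⟩ := hgspec w1 h1
        obtain ⟨hp2, hne2, heq2⟩ := hgspec w2 h2
        rw [← he] at heq2
        apply hNdist (g w1).1 hp1.1.1 (g w1).2 hp1.2.1 hne1
        ext z
        by_cases hz : z = w1
        · subst hz
          constructor
          · intro h
            have h' : z ∈ G.neighborSet (g z).1 \ {w2} := ⟨h, fun hc => hne hc⟩
            rw [heq2] at h'
            exact h'.1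
          · intro h
            have h' : z ∈ G.neighborSet (g z).2 \ {w2} := ⟨h, fun hc => hne hc⟩
            rw [← heq2] at h'
            exact h'.1
        · constructor
          · intro h
            have : z ∈ G.neighborSet (g w1).1 \ {w1} := ⟨h, hz⟩
            rw [heq1] at this
            exact this.1
          · intro h
            have : z ∈ G.neighborSet (g w1).2 \ {w1} := ⟨h, hz⟩
            rw [← heq1] at this
            exact this.1
      have hBle : B.ncard ≤ (U' ×ˢ U').ncard :=
        Set.ncard_le_ncard_of_injOn g (fun w hw => (hgspec w hw).1) hginj (Set.toFinite _)
      have hps : (U' ×ˢ U').ncard = U'.ncard * U'.ncard := by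
        rw [Set.ncard_eq_toFinset_card', Set.toFinset_prod, Finset.card_product,
          Set.ncard_eq_toFinset_card']
      have hU'card : U'.ncard = r - 1 := by
        rw [hU', Set.ncard_diff_singleton_of_mem hv0U, hU]
      have hrpos : 0 < r := by
        rw [← hU]
        exact (Set.ncard_pos (Set.toFinite U)).mpr ⟨v0, hv0U⟩
      obtain ⟨m, hm⟩ : ∃ m, r = m + 1 := ⟨r - 1, by omega⟩
      have hBlt : B.ncard < s := by
        have h6 : B.ncard ≤ m * m := by
          rw [hps, hU'card, hm] at hBle
          simpa using hBle
        have h7 : m * m < 2 ^ (m + 1) := sq_lt_two_pow_succ m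
        have h8 : 2 ^ (m + 1) ≤ s := hm ▸ hpow
        omega
      obtain ⟨w0, hw0W, hw0B⟩ : ∃ w0 ∈ W, w0 ∉ B := by
        by_contra h
        push_neg at h
        have : s ≤ B.ncard := hW ▸ Set.ncard_le_ncard h (Set.toFinite B)
        omega
      have hs2 : 2 ≤ s := by
        have : (2:ℕ) ^ 1 ≤ 2 ^ r := Nat.pow_le_pow_right (by norm_num) hrpos
        omega
      have hv0W : v0 ∉ W := Set.disjoint_left.mp hdisj hv0U
      set S' : Set V := insert v0 (W \ {w0}) with hS'
      have hS'card : S'.ncard = s := by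
        rw [hS', Set.ncard_insert_of_notMem (fun h => hv0W h.1) (Set.toFinite _),
          Set.ncard_diff_singleton_of_mem hw0W, hW]
        omega
      have hnotS' : ∀ x, x ∉ S' → x = w0 ∨ (x ∈ U ∧ x ≠ v0) := by
        intro x hx
        rcases hmemUW x with h | h
        · right
          exact ⟨h, fun he => hx (he ▸ Set.mem_insert _ _)⟩
        · by_cases hxw : x = w0
          · exact Or.inl hxw
          · exact absurd (Set.mem_insert_of_mem v0 (show x ∈ W \ {w0} from ⟨h, hxw⟩)) hx
      have hadjUv0 : ∀ x ∈ U, x ≠ v0 → Gᶜ.Adj x v0 := fun x hx hne =>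
        (SimpleGraph.compl_adj G x v0).mpr ⟨hne, hUind x hx v0 hv0U⟩
      have hw0S : w0 ∈ S := by rw [hSW]; exact hw0W
      have hw0v0 : ¬ Gᶜ.Adj w0 v0 := by
        rw [SimpleGraph.compl_adj]
        rintro ⟨-, h⟩
        exact h (hSN w0 hw0S).symm
      have hdomS' : IsDominating Gᶜ S' := by
        intro x hx
        rcases hnotS' x hx with hxw | ⟨hxU, hxv0⟩
        · have hWne : (W \ {w0}).Nonempty := by
            rw [← Set.ncard_pos (Set.toFinite _),
              Set.ncard_diff_singleton_of_mem hw0W, hW]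
            omega
          obtain ⟨w1, hw1⟩ := hWne
          refine ⟨w1, Set.mem_insert_of_mem _ hw1, (SimpleGraph.compl_adj G x w1).mpr
            ⟨?_, ?_⟩⟩
          · intro he
            exact hw1.2 (Set.mem_singleton_iff.mpr (he ▸ hxw))
          · rw [hxw]
            exact hWind w0 hw0W w1 hw1.1
        · exact ⟨v0, Set.mem_insert _ _, hadjUv0 x hxU hxv0⟩
      have htrace : ∀ x ∈ U, x ≠ v0 → v0 ∈ Gᶜ.neighborSet x ∩ S' :=
        fun x hx hne => ⟨hadjUv0 x hx hne, Set.mem_insert _ _⟩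
      have key : ∀ a ∈ U, a ≠ v0 → ∀ b ∈ U, b ≠ v0 →
          Gᶜ.neighborSet a ∩ S' = Gᶜ.neighborSet b ∩ S' →
          G.neighborSet a \ {w0} ⊆ G.neighborSet b \ {w0} := by
        intro a haU hav0 b hbU hbv0 heq z hz
        obtain ⟨hza, hzw0⟩ := hz
        have hzW : z ∈ W := hNU a haU hza
        refine ⟨?_, hzw0⟩
        have hzS' : z ∈ S' := Set.mem_insert_of_mem _ ⟨hzW, hzw0⟩
        by_contra hzb
        have hzbne : b ≠ z := fun he => Set.disjoint_left.mp hdisj (he ▸ hbU) hzW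
        have h1 : z ∈ Gᶜ.neighborSet b ∩ S' :=
          ⟨(SimpleGraph.compl_adj G b z).mpr ⟨hzbne, hzb⟩, hzS'⟩
        rw [← heq] at h1
        exact ((SimpleGraph.compl_adj G a z).mp h1.1).2 hza
      have hdistS' : IsDistinguishing Gᶜ S' := by
        intro x hx y hy hxy heq
        rcases hnotS' x hx with hxw | ⟨hxU, hxv0⟩
        · rcases hnotS' y hy with hyw | ⟨hyU, hyv0⟩
          · exact hxy (hxw.trans hyw.symm)
          · have h1 := htrace y hyU hyv0
            rw [← heq, hxw] at h1
            exact hw0v0 h1.1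
        · rcases hnotS' y hy with hyw | ⟨hyU, hyv0⟩
          · have h1 := htrace x hxU hxv0
            rw [heq, hyw] at h1
            exact hw0v0 h1.1
          · apply hw0B
            refine ⟨(x, y), ⟨⟨hxU, hxv0⟩, ⟨hyU, hyv0⟩⟩, hxy, ?_⟩
            exact Set.Subset.antisymm (key x hxU hxv0 y hyU hyv0 heq)
              (key y hyU hyv0 x hxU hxv0 heq.symm)
      have hfinal : S'.ncard = sInf {n | ∃ S : Set V, S.ncard = n ∧ IsLD G S} := by
        rw [hS'card, ← hScard, hSW, hW]
      exact Nat.sInf_le ⟨S', hfinal, hdistS', hdomS'⟩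
    · -- case v0 ∈ W : contradiction by counting
      exfalso
      have hSU : S ⊆ U := by
        intro u huS
        rcases hmemUW u with h | h
        · exact h
        · exact absurd (hSN u huS) (hWind v0 hv0W u h)
      have hWnS : ∀ w ∈ W, w ∉ S := fun w hw hwS =>
        Set.disjoint_left.mp hdisj (hSU hwS) hw
      set F : V → Finset V := fun w => (G.neighborSet w ∩ S).toFinset with hF
      have hmaps : ∀ w ∈ W.toFinset, F w ∈ S.toFinset.powerset.erase ∅ := by
        intro w hw
        rw [Set.mem_toFinset] at hw
        rw [Finset.mem_erase, Finset.mem_powerset]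
        constructor
        · obtain ⟨u, huS, hadj⟩ := hdom w (hWnS w hw)
          intro h0
          have hu : u ∈ F w := by
            simp only [hF, Set.mem_toFinset, Set.mem_inter_iff,
              SimpleGraph.mem_neighborSet]
            exact ⟨hadj, huS⟩
          rw [h0] at hu
          exact absurd hu (Finset.notMem_empty u)
        · intro x hx
          simp only [hF, Set.mem_toFinset, Set.mem_inter_iff] at hx
          rw [Set.mem_toFinset]
          exact hx.2
      have hinj : ∀ w1 ∈ W.toFinset, ∀ w2 ∈ W.toFinset, F w1 = F w2 → w1 = w2 := by
        intro w1 h1 w2 h2 he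
        rw [Set.mem_toFinset] at h1 h2
        by_contra hne
        exact hdist w1 (hWnS w1 h1) w2 (hWnS w2 h2) hne (Set.toFinset_inj.mp he)
      have hcard := Finset.card_le_card_of_injOn F hmaps hinj
      have h1 : W.toFinset.card = s := by rw [← Set.ncard_eq_toFinset_card']; exact hW
      have h2 : (S.toFinset.powerset.erase ∅).card = 2 ^ S.toFinset.card - 1 := by
        rw [Finset.card_erase_of_mem (Finset.empty_mem_powerset _), Finset.card_powerset]
      have h3 : S.toFinset.card ≤ r := by
        rw [← Set.ncard_eq_toFinset_card', ← hU]
        exact Set.ncard_le_ncard hSU (Set.toFinite U)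
      have h4 : (2:ℕ) ^ S.toFinset.card ≤ 2 ^ r := Nat.pow_le_pow_right (by norm_num) h3
      have h5 : (1:ℕ) ≤ 2 ^ r := Nat.one_le_two_pow
      omega

end
end

section
/- Let G be a connected bipartite graph with parts U and W, |U| = r, |W| = s, 3 ≤ r < s. Then λ(Ḡ) = λ(G) + 1 if and only if: (i) no two distinct vertices of W are twins; (ii) there exists w ∈ W with N(w) = U; and (iii) for every u ∈ U, the graph G − u has at least two pairs of distinct twin vertices in W. -/
set_option linter.unusedSectionVars false
set_option maxHeartbeats 1000000


noncomputable section
open Classical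

variable {V : Type*}

section Basics

variable {V : Type*} [Fintype V] {G : SimpleGraph V} {S S' : Set V}

lemma isLD_univ (G : SimpleGraph V) : IsLD G Set.univ := by
  constructor
  · intro u hu; exact absurd (Set.mem_univ u) hu
  · intro v hv; exact absurd (Set.mem_univ v) hv

lemma IsDistinguishing.mono (h : IsDistinguishing G S) (hss : S ⊆ S') :
    IsDistinguishing G S' := by
  intro u hu v hv huv heq
  refine h u (fun h' => hu (hss h')) v (fun h' => hv (hss h')) huv ?_
  have : ∀ x : V, G.neighborSet x ∩ S = (G.neighborSet x ∩ S') ∩ S := by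
    intro x; rw [Set.inter_assoc, Set.inter_eq_self_of_subset_right hss]
  rw [this u, this v, heq]

lemma IsLD.mono (h : IsLD G S) (hss : S ⊆ S') : IsLD G S' := by
  refine ⟨h.1.mono hss, ?_⟩
  intro v hv
  obtain ⟨u, hu, hadj⟩ := h.2 v (fun h' => hv (hss h'))
  exact ⟨u, hss hu, hadj⟩

lemma ldNum_spec (G : SimpleGraph V) : ∃ S : Set V, S.ncard = ldNum G ∧ IsLD G S := by
  have hne : {n | ∃ S : Set V, S.ncard = n ∧ IsLD G S}.Nonempty :=
    ⟨(Set.univ : Set V).ncard, Set.univ, rfl, isLD_univ G⟩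
  exact Nat.sInf_mem hne

lemma ldNum_le (h : IsLD G S) : ldNum G ≤ S.ncard :=
  Nat.sInf_le ⟨S, rfl, h⟩

lemma ldNum_le_card (G : SimpleGraph V) : ldNum G ≤ (Set.univ : Set V).ncard :=
  ldNum_le (isLD_univ G)

lemma exists_isLD_ncard {n : ℕ} (h1 : ldNum G ≤ n) (h2 : n ≤ (Set.univ : Set V).ncard) :
    ∃ S : Set V, S.ncard = n ∧ IsLD G S := by
  obtain ⟨S, hcard, hLD⟩ := ldNum_spec G
  obtain ⟨R, hSR, -, hR⟩ :=
    Set.exists_subsuperset_card_eq (Set.subset_univ S) (by rw [hcard]; exact h1) h2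
  exact ⟨R, hR, hLD.mono hSR⟩

lemma neighborSet_compl_inter {v : V} (hv : v ∉ S) :
    Gᶜ.neighborSet v ∩ S = S \ (G.neighborSet v ∩ S) := by
  rw [SimpleGraph.neighborSet_compl]
  ext x
  simp only [Set.mem_inter_iff, Set.mem_diff, Set.mem_compl_iff, Set.mem_singleton_iff]
  constructor
  · rintro ⟨⟨hns, hne⟩, hxS⟩; exact ⟨hxS, fun h => hns h.1⟩
  · rintro ⟨hxS, h⟩
    exact ⟨⟨fun hn => h ⟨hn, hxS⟩, fun hx => hv (hx ▸ hxS)⟩, hxS⟩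

lemma isDistinguishing_compl_iff :
    IsDistinguishing Gᶜ S ↔ IsDistinguishing G S := by
  have key : ∀ u ∉ S, ∀ v ∉ S,
      (Gᶜ.neighborSet u ∩ S = Gᶜ.neighborSet v ∩ S ↔
        G.neighborSet u ∩ S = G.neighborSet v ∩ S) := by
    intro u hu v hv
    rw [neighborSet_compl_inter hu, neighborSet_compl_inter hv]
    constructor
    · intro h
      have h1 : G.neighborSet u ∩ S ⊆ S := Set.inter_subset_right
      have h2 : G.neighborSet v ∩ S ⊆ S := Set.inter_subset_right
      rw [← Set.diff_diff_cancel_left h1, ← Set.diff_diff_cancel_left h2, h]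
    · intro h; rw [h]
  constructor
  · intro h u hu v hv huv heq
    exact h u hu v hv huv ((key u hu v hv).mpr heq ▸ (key u hu v hv).mpr heq)
  · intro h u hu v hv huv heq
    exact h u hu v hv huv ((key u hu v hv).mp heq)

end Basics
section Reduction

variable {V : Type*} [Fintype V] {G : SimpleGraph V} {S : Set V}

lemma unique_undominated {H : SimpleGraph V} (hdis : IsDistinguishing H S)
    {x y : V} (hx : x ∉ S) (hy : y ∉ S)
    (hxd : ∀ u ∈ S, ¬ H.Adj x u) (hyd : ∀ u ∈ S, ¬ H.Adj y u) : x = y := by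
  by_contra hne
  refine hdis x hx y hy hne ?_
  have h1 : H.neighborSet x ∩ S = ∅ := by
    ext z; simp only [Set.mem_inter_iff, SimpleGraph.mem_neighborSet, Set.mem_empty_iff_false,
      iff_false, not_and]
    intro hadj hz; exact hxd z hz hadj
  have h2 : H.neighborSet y ∩ S = ∅ := by
    ext z; simp only [Set.mem_inter_iff, SimpleGraph.mem_neighborSet, Set.mem_empty_iff_false,
      iff_false, not_and]
    intro hadj hz; exact hyd z hz hadj
  rw [h1, h2]

lemma ldNum_compl_le_succ (G : SimpleGraph V) : ldNum Gᶜ ≤ ldNum G + 1 := by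
  obtain ⟨S, hcard, hdis, hdom⟩ := ldNum_spec G
  have hdisc : IsDistinguishing Gᶜ S := isDistinguishing_compl_iff.mpr hdis
  by_cases hcd : IsDominating Gᶜ S
  · calc ldNum Gᶜ ≤ S.ncard := ldNum_le ⟨hdisc, hcd⟩
    _ ≤ ldNum G + 1 := by omega
  · rw [IsDominating] at hcd; push_neg at hcd
    obtain ⟨v, hv, hvbad⟩ := hcd
    have hvbad' : ∀ u ∈ S, ¬ Gᶜ.Adj v u := fun u hu hadj => hvbad u hu hadj
    have hLD : IsLD Gᶜ (insert v S) := by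
      refine ⟨hdisc.mono (Set.subset_insert v S), ?_⟩
      intro x hx
      by_contra hxd
      push_neg at hxd
      have hxS : x ∉ S := fun h => hx (Set.mem_insert_of_mem v h)
      have : x = v := unique_undominated hdisc hxS hv
        (fun u hu => hxd u (Set.mem_insert_of_mem v hu)) hvbad'
      exact hx (this ▸ Set.mem_insert x S)
    have : (insert v S).ncard = S.ncard + 1 :=
      Set.ncard_insert_of_notMem hv (Set.toFinite S)
    calc ldNum Gᶜ ≤ (insert v S).ncard := ldNum_le hLD
    _ = ldNum G + 1 := by rw [this, hcard]

lemma main_reduction (G : SimpleGraph V) :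
    ldNum Gᶜ = ldNum G + 1 ↔ ¬ ∃ S : Set V, S.ncard = ldNum G ∧ IsLD Gᶜ S := by
  constructor
  · rintro heq ⟨S, hcard, hLD⟩
    have := ldNum_le hLD
    omega
  · intro h
    have hle := ldNum_compl_le_succ G
    have hgt : ¬ ldNum Gᶜ ≤ ldNum G := by
      intro hle'
      exact h (exists_isLD_ncard hle' (ldNum_le_card G))
    omega

end Reduction
set_option linter.unusedSectionVars false

section BipBasics

variable {V : Type*} [Fintype V] {G : SimpleGraph V} {U W : Set V} {S : Set V}

lemma BipartitionOf.mem_or (hbip : BipartitionOf G U W) (v : V) : v ∈ U ∨ v ∈ W := by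
  have := hbip.1
  have hv : v ∈ U ∪ W := this ▸ Set.mem_univ v
  exact hv

lemma BipartitionOf.not_mem_U (hbip : BipartitionOf G U W) {v : V} (hv : v ∈ W) : v ∉ U :=
  fun h => Set.disjoint_left.mp hbip.2.1 h hv

lemma BipartitionOf.not_mem_W (hbip : BipartitionOf G U W) {v : V} (hv : v ∈ U) : v ∉ W :=
  fun h => Set.disjoint_left.mp hbip.2.1 hv h

lemma BipartitionOf.nbhd_W (hbip : BipartitionOf G U W) {w : V} (hw : w ∈ W) :
    G.neighborSet w ⊆ U := by
  intro z hz
  rcases hbip.mem_or z with hzU | hzW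
  · exact hzU
  · exact absurd hz (hbip.2.2.2 w hw z hzW)

lemma BipartitionOf.nbhd_U (hbip : BipartitionOf G U W) {u : V} (hu : u ∈ U) :
    G.neighborSet u ⊆ W := by
  intro z hz
  rcases hbip.mem_or z with hzU | hzW
  · exact absurd hz (hbip.2.2.1 u hu z hzU)
  · exact hzW

lemma neighborSet_nonempty_of_connected (hconn : G.Connected)
    (hcard : 2 ≤ Fintype.card V) (v : V) : (G.neighborSet v).Nonempty := by
  obtain ⟨x, hx⟩ := Fintype.exists_ne_of_one_lt_card (by omega) v
  obtain ⟨wlk⟩ := hconn.preconnected v x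
  cases wlk with
  | nil => exact absurd rfl hx
  | cons h p => exact ⟨_, h⟩

/-- neighborhood vector over `ZMod 2` -/
def nvec (G : SimpleGraph V) (w : V) : V → ZMod 2 := fun z => if G.Adj w z then 1 else 0

lemma nvec_sub_eq_single {x y u : V}
    (hzs : ∀ z, z ≠ u → (G.Adj x z ↔ G.Adj y z))
    (hu : ¬ (G.Adj x u ↔ G.Adj y u)) :
    nvec G x - nvec G y = Pi.single u (1 : ZMod 2) := by
  funext z
  by_cases hz : z = u
  · subst hz
    simp only [Pi.sub_apply, nvec, Pi.single_eq_same]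
    by_cases h1 : G.Adj x z <;> by_cases h2 : G.Adj y z <;>
      simp [h1, h2] at hu ⊢ <;> tauto
  · have := hzs z hz
    simp only [Pi.sub_apply, nvec, Pi.single_eq_of_ne hz]
    by_cases h1 : G.Adj x z
    · rw [if_pos h1, if_pos (this.mp h1)]; ring
    · rw [if_neg h1, if_neg (fun h2 => h1 (this.mpr h2))]; ring

lemma nvec_inj (hnt : ∀ w₁ ∈ W, ∀ w₂ ∈ W, w₁ ≠ w₂ → G.neighborSet w₁ ≠ G.neighborSet w₂)
    {x y : V} (hx : x ∈ W) (hy : y ∈ W) (h : nvec G x = nvec G y) : x = y := by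
  by_contra hne
  refine hnt x hx y hy hne ?_
  ext z
  have := congrFun h z
  simp only [nvec] at this
  by_cases h1 : G.Adj x z <;> by_cases h2 : G.Adj y z <;>
    simp [h1, h2] at this ⊢
end BipBasics
section Pairs

variable {V : Type*} [Fintype V] {G : SimpleGraph V} {U W S : Set V}

/-- An avoid-pair satisfies the open condition. -/
lemma avoid_pair_open (hbip : BipartitionOf G U W)
    (hnt : ∀ w₁ ∈ W, ∀ w₂ ∈ W, w₁ ≠ w₂ → G.neighborSet w₁ ≠ G.neighborSet w₂)
    {u x y : V} (hu : u ∈ U) (hx : x ∈ W) (hy : y ∈ W) (hxy : x ≠ y)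
    (hav : TwinsAvoid G u x y) :
    G.neighborSet x \ {u} = G.neighborSet y \ {u} := by
  rcases hav with h | h
  · exact h
  · exfalso
    have hxu : x ≠ u := fun h' => hbip.not_mem_U hx (h' ▸ hu)
    have hxmem : x ∈ (G.neighborSet x ∪ {x}) \ {u} := by
      simp [hxu]
    rw [h] at hxmem
    rcases hxmem.1 with h' | h'
    · exact hbip.not_mem_U hx (hbip.nbhd_W hy h')
    · exact hxy (Set.mem_singleton_iff.mp h')

lemma avoid_pair_props (hbip : BipartitionOf G U W)
    (hnt : ∀ w₁ ∈ W, ∀ w₂ ∈ W, w₁ ≠ w₂ → G.neighborSet w₁ ≠ G.neighborSet w₂)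
    {u x y : V} (hu : u ∈ U) (hx : x ∈ W) (hy : y ∈ W) (hxy : x ≠ y)
    (hav : TwinsAvoid G u x y) :
    (∀ z, z ≠ u → (G.Adj x z ↔ G.Adj y z)) ∧ ¬ (G.Adj x u ↔ G.Adj y u) := by
  have hopen := avoid_pair_open hbip hnt hu hx hy hxy hav
  constructor
  · intro z hz
    constructor
    · intro h
      have : z ∈ G.neighborSet x \ {u} := ⟨h, hz⟩
      rw [hopen] at this; exact this.1
    · intro h
      have : z ∈ G.neighborSet y \ {u} := ⟨h, hz⟩
      rw [← hopen] at this; exact this.1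
  · intro hiff
    refine hnt x hx y hy hxy ?_
    ext z
    by_cases hz : z = u
    · subst hz; exact hiff
    · constructor
      · intro h
        have : z ∈ G.neighborSet x \ {u} := ⟨h, hz⟩
        rw [hopen] at this; exact this.1
      · intro h
        have : z ∈ G.neighborSet y \ {u} := ⟨h, hz⟩
        rw [← hopen] at this; exact this.1

/-- two avoid-pairs for the same `u` sharing their first element are equal -/
lemma avoid_pair_share (hbip : BipartitionOf G U W)
    (hnt : ∀ w₁ ∈ W, ∀ w₂ ∈ W, w₁ ≠ w₂ → G.neighborSet w₁ ≠ G.neighborSet w₂)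
    {u x y y' : V} (hu : u ∈ U) (hx : x ∈ W) (hy : y ∈ W) (hy' : y' ∈ W)
    (hxy : x ≠ y) (hxy' : x ≠ y')
    (h1 : TwinsAvoid G u x y) (h2 : TwinsAvoid G u x y') : y = y' := by
  obtain ⟨e1, d1⟩ := avoid_pair_props hbip hnt hu hx hy hxy h1
  obtain ⟨e2, d2⟩ := avoid_pair_props hbip hnt hu hx hy' hxy' h2
  by_contra hne
  refine hnt y hy y' hy' hne ?_
  ext z
  simp only [SimpleGraph.mem_neighborSet]
  by_cases hz : z = u
  · subst hz; tauto
  · rw [← e1 z hz, e2 z hz]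

lemma twinsAvoid_symm {u x y : V} (h : TwinsAvoid G u x y) : TwinsAvoid G u y x := by
  rcases h with h | h
  · exact Or.inl h.symm
  · exact Or.inr h.symm

/-- the two pairs given by condition (iii) are disjoint (under no-twins) -/
lemma avoid_pairs_disjoint (hbip : BipartitionOf G U W)
    (hnt : ∀ w₁ ∈ W, ∀ w₂ ∈ W, w₁ ≠ w₂ → G.neighborSet w₁ ≠ G.neighborSet w₂)
    {u x₁ y₁ x₂ y₂ : V} (hu : u ∈ U)
    (hx₁ : x₁ ∈ W) (hy₁ : y₁ ∈ W) (hx₂ : x₂ ∈ W) (hy₂ : y₂ ∈ W)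
    (h₁ : x₁ ≠ y₁) (h₂ : x₂ ≠ y₂)
    (hav₁ : TwinsAvoid G u x₁ y₁) (hav₂ : TwinsAvoid G u x₂ y₂)
    (hsets : ({x₁, y₁} : Set V) ≠ {x₂, y₂}) :
    x₁ ≠ x₂ ∧ x₁ ≠ y₂ ∧ y₁ ≠ x₂ ∧ y₁ ≠ y₂ := by
  refine ⟨?_, ?_, ?_, ?_⟩
  · intro h; subst h
    exact hsets (by rw [avoid_pair_share hbip hnt hu hx₁ hy₁ hy₂ h₁ h₂ hav₁ hav₂])
  · intro h; subst h
    have := avoid_pair_share hbip hnt hu hx₁ hy₁ hx₂ h₁ (Ne.symm h₂) hav₁ (twinsAvoid_symm hav₂)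
    subst this
    exact hsets (Set.pair_comm x₁ y₁)
  · intro h; subst h
    have := avoid_pair_share hbip hnt hu hy₁ hx₁ hy₂ (Ne.symm h₁) h₂ (twinsAvoid_symm hav₁) hav₂
    subst this
    exact hsets (Set.pair_comm x₁ y₁)
  · intro h; subst h
    have := avoid_pair_share hbip hnt hu hy₁ hx₁ hx₂ (Ne.symm h₁) (Ne.symm h₂)
      (twinsAvoid_symm hav₁) (twinsAvoid_symm hav₂)
    subst this
    exact hsets rfl

end Pairs

section PairGraph

variable {V : Type*} [Fintype V] (G : SimpleGraph V) (W S : Set V)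

/-- Auxiliary graph on `W`: edges are avoid-pairs with label outside `S`. -/
def pairGraph : SimpleGraph V where
  Adj x y := x ≠ y ∧ x ∈ W ∧ y ∈ W ∧
    ∃ u, u ∉ S ∧ G.neighborSet x \ {u} = G.neighborSet y \ {u}
  symm := by
    constructor
    rintro x y ⟨h1, h2, h3, u, h4, h5⟩
    exact ⟨h1.symm, h3, h2, u, h4, h5.symm⟩
  loopless := by constructor; rintro x ⟨h1, -⟩; exact h1 rfl

variable {G W S}

lemma pairGraph_adj_trace {x y : V} (h : (pairGraph G W S).Adj x y) :
    G.neighborSet x ∩ S = G.neighborSet y ∩ S := by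
  obtain ⟨-, -, -, u, huS, hav⟩ := h
  ext z
  simp only [Set.mem_inter_iff]
  constructor
  · rintro ⟨hz, hzS⟩
    have hzu : z ≠ u := fun h' => huS (h' ▸ hzS)
    have : z ∈ G.neighborSet x \ {u} := ⟨hz, hzu⟩
    rw [hav] at this
    exact ⟨this.1, hzS⟩
  · rintro ⟨hz, hzS⟩
    have hzu : z ≠ u := fun h' => huS (h' ▸ hzS)
    have : z ∈ G.neighborSet y \ {u} := ⟨hz, hzu⟩
    rw [← hav] at this
    exact ⟨this.1, hzS⟩

lemma pairGraph_walk_trace {x y : V} (p : (pairGraph G W S).Walk x y) :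
    G.neighborSet x ∩ S = G.neighborSet y ∩ S := by
  induction p with
  | nil => rfl
  | cons h _ ih => rw [pairGraph_adj_trace h, ih]

lemma pairGraph_reach_W {x y : V} (h : (pairGraph G W S).Reachable x y)
    (hx : x ∈ W) : y ∈ W := by
  obtain ⟨p⟩ := h
  induction p with
  | nil => exact hx
  | cons h _ ih => exact ih h.2.2.1

lemma pairGraph_reach_trace {x y : V} (h : (pairGraph G W S).Reachable x y) :
    G.neighborSet x ∩ S = G.neighborSet y ∩ S := by
  obtain ⟨p⟩ := h
  exact pairGraph_walk_trace p

end PairGraph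
section KeyLemma

variable {V : Type*} [Fintype V] {G : SimpleGraph V} {U W S : Set V}

lemma key_lemma (hbip : BipartitionOf G U W)
    (hnt : ∀ w₁ ∈ W, ∀ w₂ ∈ W, w₁ ≠ w₂ → G.neighborSet w₁ ≠ G.neighborSet w₂)
    (hiii : ∀ u ∈ U, ∃ x₁ y₁ x₂ y₂ : V,
        x₁ ∈ W ∧ y₁ ∈ W ∧ x₂ ∈ W ∧ y₂ ∈ W ∧ x₁ ≠ y₁ ∧ x₂ ≠ y₂ ∧
        TwinsAvoid G u x₁ y₁ ∧ TwinsAvoid G u x₂ y₂ ∧ ({x₁, y₁} : Set V) ≠ {x₂, y₂})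
    (hdis : IsDistinguishing G S) (hUS : ¬ U ⊆ S) :
    (U \ S).ncard + 1 ≤ (S ∩ W).ncard := by
  classical
  have hch : ∀ u : V, ∃ x₁ y₁ x₂ y₂ : V, u ∈ U \ S →
      (x₁ ∈ W ∧ y₁ ∈ W ∧ x₂ ∈ W ∧ y₂ ∈ W ∧ x₁ ≠ y₁ ∧ x₂ ≠ y₂ ∧
      TwinsAvoid G u x₁ y₁ ∧ TwinsAvoid G u x₂ y₂ ∧ ({x₁, y₁} : Set V) ≠ {x₂, y₂}) := by
    intro u
    by_cases hu : u ∈ U \ S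
    · obtain ⟨a, b, c, d, props⟩ := hiii u hu.1
      exact ⟨a, b, c, d, fun _ => props⟩
    · exact ⟨u, u, u, u, fun h => absurd h hu⟩
  choose p₁ q₁ p₂ q₂ hp using hch
  set F := pairGraph G W S with hFdef
  set Mf : Finset V := Finset.univ.filter (fun u => u ∈ U \ S) with hMf
  have hMfmem : ∀ u, u ∈ Mf ↔ u ∈ U \ S := by intro u; simp [hMf]
  -- edges of F coming from the chosen pairs
  have edge1 : ∀ u ∈ Mf, F.Adj (p₁ u) (q₁ u) := by
    intro u hu
    obtain ⟨w1, w2, -, -, hne, -, hav, -, -⟩ := hp u ((hMfmem u).mp hu)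
    exact ⟨hne, w1, w2, u, ((hMfmem u).mp hu).2,
      avoid_pair_open hbip hnt ((hMfmem u).mp hu).1 w1 w2 hne hav⟩
  have edge2 : ∀ u ∈ Mf, F.Adj (p₂ u) (q₂ u) := by
    intro u hu
    obtain ⟨-, -, w3, w4, -, hne, -, hav, -⟩ := hp u ((hMfmem u).mp hu)
    exact ⟨hne, w3, w4, u, ((hMfmem u).mp hu).2,
      avoid_pair_open hbip hnt ((hMfmem u).mp hu).1 w3 w4 hne hav⟩
  have sng1 : ∀ u ∈ Mf, nvec G (p₁ u) - nvec G (q₁ u) = Pi.single u (1 : ZMod 2) := by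
    intro u hu
    obtain ⟨w1, w2, -, -, hne, -, hav, -, -⟩ := hp u ((hMfmem u).mp hu)
    obtain ⟨hzs, hxu⟩ := avoid_pair_props hbip hnt ((hMfmem u).mp hu).1 w1 w2 hne hav
    exact nvec_sub_eq_single hzs hxu
  have sng2 : ∀ u ∈ Mf, nvec G (p₂ u) - nvec G (q₂ u) = Pi.single u (1 : ZMod 2) := by
    intro u hu
    obtain ⟨-, -, w3, w4, -, hne, -, hav, -⟩ := hp u ((hMfmem u).mp hu)
    obtain ⟨hzs, hxu⟩ := avoid_pair_props hbip hnt ((hMfmem u).mp hu).1 w3 w4 hne hav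
    exact nvec_sub_eq_single hzs hxu
  have hdisj : ∀ u ∈ Mf, p₁ u ≠ p₂ u ∧ p₁ u ≠ q₂ u ∧ q₁ u ≠ p₂ u ∧ q₁ u ≠ q₂ u := by
    intro u hu
    obtain ⟨w1, w2, w3, w4, hne1, hne2, hav1, hav2, hsets⟩ := hp u ((hMfmem u).mp hu)
    exact avoid_pairs_disjoint hbip hnt ((hMfmem u).mp hu).1 w1 w2 w3 w4 hne1 hne2
      hav1 hav2 hsets
  have hq1 : ∀ u ∈ Mf, p₁ u ≠ q₁ u := by
    intro u hu
    obtain ⟨-, -, -, -, hne, -⟩ := hp u ((hMfmem u).mp hu)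
    exact hne
  have hq2 : ∀ u ∈ Mf, p₂ u ≠ q₂ u := by
    intro u hu
    obtain ⟨-, -, -, -, -, hne, -⟩ := hp u ((hMfmem u).mp hu)
    exact hne
  set cmk : V → F.ConnectedComponent := F.connectedComponentMk with hcmkdef
  set comp : V → Bool → F.ConnectedComponent :=
    fun u i => cmk (if i then p₁ u else p₂ u) with hcompdef
  set dom : Finset (V × Bool) := Mf ×ˢ Finset.univ with hdom
  set CC : Finset F.ConnectedComponent := dom.image (fun z => comp z.1 z.2) with hCC
  set SWf : Finset V := Finset.univ.filter (fun x => x ∈ S ∩ W) with hSWf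
  set Cf : F.ConnectedComponent → Finset V :=
    fun K => Finset.univ.filter (fun x => cmk x = K) with hCf
  set Tf : F.ConnectedComponent → Finset V := fun K => Cf K ∩ SWf with hTf
  set fib : F.ConnectedComponent → Finset (V × Bool) :=
    fun K => dom.filter (fun z => comp z.1 z.2 = K) with hfib
  have hcount : dom.card = ∑ K ∈ CC, (fib K).card :=
    Finset.card_eq_sum_card_fiberwise (fun x hx => Finset.mem_image_of_mem _ hx)
  have hdomcard : dom.card = 2 * Mf.card := by
    rw [hdom, Finset.card_product]
    simp [Finset.card_univ]
    ring
  -- main per-component bound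
  have hKmain : ∀ K ∈ CC, (fib K).card + 1 ≤ 2 * (Tf K).card := by
    intro K hK
    obtain ⟨z, hz, hzK⟩ := Finset.mem_image.mp hK
    have hzdom := hz
    rw [hdom, Finset.mem_product] at hzdom
    have hz1 : z.1 ∈ Mf := hzdom.1
    set Lf : Finset V := Mf.filter (fun u => comp u true = K ∨ comp u false = K) with hLfdef
    have hfibmem : ∀ a : V × Bool, a ∈ fib K ↔ a.1 ∈ Mf ∧ comp a.1 a.2 = K := by
      intro a
      rw [hfib, Finset.mem_filter, hdom, Finset.mem_product]
      constructor
      · rintro ⟨⟨h1, -⟩, h2⟩; exact ⟨h1, h2⟩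
      · rintro ⟨h1, h2⟩; exact ⟨⟨h1, Finset.mem_univ _⟩, h2⟩
    have hfibsub : fib K ⊆ Lf ×ˢ Finset.univ := by
      intro a ha
      rw [hfibmem] at ha
      refine Finset.mem_product.mpr ⟨Finset.mem_filter.mpr ⟨ha.1, ?_⟩, Finset.mem_univ _⟩
      rcases hb : a.2 with _ | _
      · right; rw [← ha.2, hb]
      · left; rw [← ha.2, hb]
    have hfible : (fib K).card ≤ 2 * Lf.card := by
      calc (fib K).card ≤ (Lf ×ˢ (Finset.univ : Finset Bool)).card :=
            Finset.card_le_card hfibsub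
      _ = 2 * Lf.card := by rw [Finset.card_product]; simp [Finset.card_univ]; ring
    -- component membership facts
    have hCfmem : ∀ x, x ∈ Cf K ↔ cmk x = K := by intro x; simp [hCf]
    have hcomp_mem : ∀ u ∈ Mf, ∀ i : Bool, comp u i = K →
        (if i then p₁ u else p₂ u) ∈ Cf K ∧ (if i then q₁ u else q₂ u) ∈ Cf K := by
      intro u hu i hi
      rcases i with _ | _
      · simp only [if_false, Bool.false_eq_true] at *
        refine ⟨(hCfmem _).mpr hi, (hCfmem _).mpr ?_⟩
        rw [← hi]
        exact (SimpleGraph.ConnectedComponent.connectedComponentMk_eq_of_adj (G := F) (edge2 u hu)).symm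
      · simp only [if_true] at *
        refine ⟨(hCfmem _).mpr hi, (hCfmem _).mpr ?_⟩
        rw [← hi]
        exact (SimpleGraph.ConnectedComponent.connectedComponentMk_eq_of_adj (G := F) (edge1 u hu)).symm
    -- a distinguished vertex of the component, in W
    set xw : V := if z.2 then p₁ z.1 else p₂ z.1 with hxw
    have hxwK : xw ∈ Cf K := (hcomp_mem z.1 hz1 z.2 hzK).1
    have hxwW : xw ∈ W := by
      rcases hz2 : z.2 with _ | _ <;> rw [hxw, hz2]
      · obtain ⟨-, -, w3, -⟩ := hp z.1 ((hMfmem z.1).mp hz1)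
        simpa using w3
      · obtain ⟨w1, -⟩ := hp z.1 ((hMfmem z.1).mp hz1)
        simpa using w1
    have hreach : ∀ x ∈ Cf K, F.Reachable xw x := by
      intro x hx
      have h1 : cmk xw = K := (hCfmem xw).mp hxwK
      have h2 : cmk x = K := (hCfmem x).mp hx
      exact SimpleGraph.ConnectedComponent.exact (h1.trans h2.symm)
    have hCfW : ∀ x ∈ Cf K, x ∈ W := fun x hx => pairGraph_reach_W (hreach x hx) hxwW
    have hCftrace : ∀ x ∈ Cf K, ∀ y ∈ Cf K,
        G.neighborSet x ∩ S = G.neighborSet y ∩ S := by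
      intro x hx y hy
      rw [← pairGraph_reach_trace (hreach x hx), ← pairGraph_reach_trace (hreach y hy)]
    -- (K3) : |Cf K| ≤ |Tf K| + 1
    have hK3 : (Cf K).card ≤ (Tf K).card + 1 := by
      have hsplit : Cf K ⊆ Tf K ∪ (Cf K \ Tf K) := by
        intro x hx
        by_cases hxT : x ∈ Tf K
        · exact Finset.mem_union_left _ hxT
        · exact Finset.mem_union_right _ (Finset.mem_sdiff.mpr ⟨hx, hxT⟩)
      have hone : (Cf K \ Tf K).card ≤ 1 := by
        rw [Finset.card_le_one]
        intro a ha b hb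
        have haC := (Finset.mem_sdiff.mp ha).1
        have hbC := (Finset.mem_sdiff.mp hb).1
        have haS : a ∉ S := by
          intro haS
          exact (Finset.mem_sdiff.mp ha).2 (Finset.mem_inter.mpr ⟨haC,
            Finset.mem_filter.mpr ⟨Finset.mem_univ _, ⟨haS, hCfW a haC⟩⟩⟩)
        have hbS : b ∉ S := by
          intro hbS
          exact (Finset.mem_sdiff.mp hb).2 (Finset.mem_inter.mpr ⟨hbC,
            Finset.mem_filter.mpr ⟨Finset.mem_univ _, ⟨hbS, hCfW b hbC⟩⟩⟩)
        by_contra hab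
        exact hdis a haS b hbS hab (hCftrace a haC b hbC)
      calc (Cf K).card ≤ (Tf K ∪ (Cf K \ Tf K)).card := Finset.card_le_card hsplit
      _ ≤ (Tf K).card + (Cf K \ Tf K).card := Finset.card_union_le _ _
      _ ≤ (Tf K).card + 1 := by omega
    -- linear algebra bound, for an arbitrary base point in the component
    have hLA : ∀ x₀ ∈ Cf K,
        Lf.card ≤ ((Cf K).erase x₀).card ∧
        (Lf.card = ((Cf K).erase x₀).card →
          LinearIndependent (ZMod 2)
            (fun x : ↥((Cf K).erase x₀) => nvec G x.val - nvec G x₀)) := by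
      intro x₀ hx₀
      set dv : V → (V → ZMod 2) := fun x => nvec G x - nvec G x₀ with hdv
      set genF : Finset (V → ZMod 2) := ((Cf K).erase x₀).image dv with hgenF
      set D : Submodule (ZMod 2) (V → ZMod 2) := Submodule.span (ZMod 2) ↑genF with hD
      have hdvD : ∀ x ∈ Cf K, dv x ∈ D := by
        intro x hx
        by_cases hxx : x = x₀
        · rw [hxx]
          have : dv x₀ = 0 := by rw [hdv]; simp
          rw [this]; exact Submodule.zero_mem D
        · exact Submodule.subset_span (Finset.mem_coe.mpr
            (Finset.mem_image_of_mem dv (Finset.mem_erase.mpr ⟨hxx, hx⟩)))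
      have hsingD : ∀ u ∈ Lf, Pi.single u (1 : ZMod 2) ∈ D := by
        intro u hu
        rw [hLfdef, Finset.mem_filter] at hu
        obtain ⟨huM, hcase⟩ := hu
        rcases hcase with hcase | hcase
        · obtain ⟨hpm, hqm⟩ := hcomp_mem u huM true hcase
          simp only [if_true] at hpm hqm
          have : Pi.single u (1 : ZMod 2) = dv (p₁ u) - dv (q₁ u) := by
            rw [hdv]; simp only [sub_sub_sub_cancel_right]; exact (sng1 u huM).symm
          rw [this]
          exact Submodule.sub_mem D (hdvD _ hpm) (hdvD _ hqm)
        · obtain ⟨hpm, hqm⟩ := hcomp_mem u huM false hcase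
          simp only [if_false, Bool.false_eq_true] at hpm hqm
          have : Pi.single u (1 : ZMod 2) = dv (p₂ u) - dv (q₂ u) := by
            rw [hdv]; simp only [sub_sub_sub_cancel_right]; exact (sng2 u huM).symm
          rw [this]
          exact Submodule.sub_mem D (hdvD _ hpm) (hdvD _ hqm)
      set sgl : ↥Lf → (V → ZMod 2) := fun u => Pi.single (u : V) (1 : ZMod 2) with hsgl
      have hsingind : LinearIndependent (ZMod 2) sgl := by
        have hb := (Pi.basisFun (ZMod 2) V).linearIndependent
        have h2 := hb.comp (Subtype.val : ↥Lf → V) Subtype.val_injective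
        have : sgl = fun u : ↥Lf => (Pi.basisFun (ZMod 2) V) u.val := by
          funext u; rw [hsgl, Pi.basisFun_apply]
        rw [this]
        exact h2
      have hLle : Lf.card ≤ Module.finrank (ZMod 2) D := by
        have hsub : Submodule.span (ZMod 2) (Set.range sgl) ≤ D := by
          rw [Submodule.span_le]
          rintro v ⟨u, rfl⟩
          exact hsingD u.val u.property
        have := Submodule.finrank_mono hsub
        rwa [finrank_span_eq_card hsingind, Fintype.card_coe] at this
      have hDle : Module.finrank (ZMod 2) D ≤ ((Cf K).erase x₀).card := by
        have h1 : Module.finrank (ZMod 2) D ≤ genF.card := finrank_span_finset_le_card genF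
        exact le_trans h1 Finset.card_image_le
      constructor
      · exact le_trans hLle hDle
      · intro heq
        have hDeq : Module.finrank (ZMod 2) D = ((Cf K).erase x₀).card := by omega
        have hrange : Set.range (fun x : ↥((Cf K).erase x₀) => dv x.val) = ↑genF := by
          rw [hgenF, Finset.coe_image]
          exact (Set.image_eq_range dv ((Cf K).erase x₀ : Set V)).symm
        rw [linearIndependent_iff_card_eq_finrank_span]
        rw [Set.finrank, hrange, ← hD, hDeq, Fintype.card_coe]
    -- now the main bound by contradiction
    by_contra hcon
    push_neg at hcon
    -- hcon : 2 * (Tf K).card < (fib K).card + 1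
    have hx₀K : xw ∈ Cf K := hxwK
    obtain ⟨hLle, hLind⟩ := hLA xw hxwK
    have hxwCf : ((Cf K).erase xw).card = (Cf K).card - 1 := Finset.card_erase_of_mem hxwK
    have hCfpos : 1 ≤ (Cf K).card := Finset.card_pos.mpr ⟨xw, hxwK⟩
    -- equalities
    have heq1 : Lf.card = ((Cf K).erase xw).card := by omega
    have heq2 : (fib K).card = 2 * Lf.card := by omega
    have hfibeq : fib K = Lf ×ˢ (Finset.univ : Finset Bool) := by
      apply Finset.eq_of_subset_of_card_le hfibsub
      rw [Finset.card_product]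
      simp only [Finset.card_univ, Fintype.card_bool]
      omega
    -- z.1 has both labels in K
    have hz1L : z.1 ∈ Lf := by
      have : z ∈ fib K := (hfibmem z).mpr ⟨hz1, hzK⟩
      rw [hfibeq] at this
      exact (Finset.mem_product.mp this).1
    have hboth : comp z.1 true = K ∧ comp z.1 false = K := by
      constructor
      · have : (z.1, true) ∈ fib K := by
          rw [hfibeq]
          exact Finset.mem_product.mpr ⟨hz1L, Finset.mem_univ _⟩
        exact ((hfibmem _).mp this).2
      · have : (z.1, false) ∈ fib K := by
          rw [hfibeq]
          exact Finset.mem_product.mpr ⟨hz1L, Finset.mem_univ _⟩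
        exact ((hfibmem _).mp this).2
    obtain ⟨hp1K, hq1K⟩ := hcomp_mem z.1 hz1 true hboth.1
    obtain ⟨hp2K, hq2K⟩ := hcomp_mem z.1 hz1 false hboth.2
    simp only [if_true, if_false, Bool.false_eq_true] at hp1K hq1K hp2K hq2K
    -- the independent family
    have hind := hLind heq1
    -- name the four vertices, with xwIsP1 or xw = p₂ z.1 by cases on z.2
    obtain ⟨d12, d13, d23, d24⟩ := hdisj z.1 hz1
    have hne1 := hq1 z.1 hz1
    have hne2 := hq2 z.1 hz1
    have hrel1 := sng1 z.1 hz1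
    have hrel2 := sng2 z.1 hz1
    -- generic contradiction
    have contra : ∀ (a c d : V), a ∈ (Cf K).erase xw → c ∈ (Cf K).erase xw →
        d ∈ (Cf K).erase xw → a ≠ c → a ≠ d → c ≠ d →
        (nvec G xw - nvec G a) = Pi.single z.1 (1 : ZMod 2) →
        (nvec G c - nvec G d) = Pi.single z.1 (1 : ZMod 2) → False := by
      intro a c d ha hc hd hac had hcd hrA hrCD
      set g : ↥((Cf K).erase xw) → (V → ZMod 2) :=
        fun x => nvec G x.val - nvec G xw with hg
      have hsum : (1 : ZMod 2) • g ⟨a, ha⟩ + ((1 : ZMod 2) • g ⟨c, hc⟩ +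
          (-1 : ZMod 2) • g ⟨d, hd⟩) = 0 := by
        simp only [hg, one_smul, neg_smul]
        have e3 : nvec G a - nvec G xw + ((nvec G c - nvec G xw) + -(nvec G d - nvec G xw)) =
            (nvec G c - nvec G d) - (nvec G xw - nvec G a) := by ring
        rw [e3, hrCD, hrA, sub_self]
      have hA : (⟨a, ha⟩ : ↥((Cf K).erase xw)) ≠ ⟨c, hc⟩ := by
        simp only [ne_eq, Subtype.mk_eq_mk]; exact hac
      have hAd : (⟨a, ha⟩ : ↥((Cf K).erase xw)) ≠ ⟨d, hd⟩ := by
        simp only [ne_eq, Subtype.mk_eq_mk]; exact had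
      have hCd : (⟨c, hc⟩ : ↥((Cf K).erase xw)) ≠ ⟨d, hd⟩ := by
        simp only [ne_eq, Subtype.mk_eq_mk]; exact hcd
      set sA : Finset ↥((Cf K).erase xw) := {⟨a, ha⟩, ⟨c, hc⟩, ⟨d, hd⟩} with hsA
      set coeff : ↥((Cf K).erase xw) → ZMod 2 :=
        fun i => if i = ⟨d, hd⟩ then (-1 : ZMod 2) else 1 with hcoeff
      have hsumA : ∑ i ∈ sA, coeff i • g i = 0 := by
        rw [hsA, Finset.sum_insert (by simp [hA, hAd]),
          Finset.sum_insert (by simp [hCd]), Finset.sum_singleton]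
        simp only [hcoeff, if_neg hAd, if_neg hCd, if_pos rfl]
        exact hsum
      have := linearIndependent_iff'.mp hind sA coeff hsumA ⟨a, ha⟩ (by simp [hsA])
      simp only [hcoeff, if_neg hAd] at this
      exact one_ne_zero this
    -- apply contra according to z.2
    have hq1e : q₁ z.1 ∈ (Cf K).erase xw ∨ True := Or.inr trivial
    rcases hz2 : z.2 with _ | _
    · -- z.2 = false : xw = p₂ z.1
      have hxweq : xw = p₂ z.1 := by rw [hxw, hz2]; simp
      refine contra (q₂ z.1) (p₁ z.1) (q₁ z.1)
        (Finset.mem_erase.mpr ⟨by rw [hxweq]; exact fun h => hne2 h.symm, hq2K⟩)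
        (Finset.mem_erase.mpr ⟨by rw [hxweq]; exact d12, hp1K⟩)
        (Finset.mem_erase.mpr ⟨by rw [hxweq]; exact d23, hq1K⟩)
        (fun h => d13 h.symm) (fun h => d24 h.symm) hne1 ?_ hrel1
      rw [hxweq]
      exact hrel2
    · -- z.2 = true : xw = p₁ z.1
      have hxweq : xw = p₁ z.1 := by rw [hxw, hz2]; simp
      refine contra (q₁ z.1) (p₂ z.1) (q₂ z.1)
        (Finset.mem_erase.mpr ⟨by rw [hxweq]; exact fun h => hne1 h.symm, hq1K⟩)
        (Finset.mem_erase.mpr ⟨by rw [hxweq]; exact fun h => d12 h.symm, hp2K⟩)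
        (Finset.mem_erase.mpr ⟨by rw [hxweq]; exact fun h => d13 h.symm, hq2K⟩)
        d23 d24 hne2 ?_ hrel2
      rw [hxweq]
      exact hrel1
  have hTdisj : ∀ K ∈ CC, ∀ K' ∈ CC, K ≠ K' → Disjoint (Tf K) (Tf K') := by
    intro K _ K' _ hKK'
    rw [Finset.disjoint_left]
    intro x hx hx'
    have h1 : cmk x = K := (Finset.mem_filter.mp (Finset.mem_inter.mp hx).1).2
    have h2 : cmk x = K' := (Finset.mem_filter.mp (Finset.mem_inter.mp hx').1).2
    exact hKK' (h1 ▸ h2)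
  have hsum : ∑ K ∈ CC, (Tf K).card ≤ SWf.card := by
    rw [← Finset.card_biUnion hTdisj]
    exact Finset.card_le_card (by
      intro x hx
      obtain ⟨K, -, hK⟩ := Finset.mem_biUnion.mp hx
      exact (Finset.mem_inter.mp hK).2)
  have hCCne : 1 ≤ CC.card := by
    obtain ⟨u, hu⟩ : ∃ u, u ∈ U \ S := Set.not_subset.mp hUS |>.imp (fun u h => ⟨h.1, h.2⟩)
    have hu' : u ∈ Mf := (hMfmem u).mpr hu
    have : comp u true ∈ CC := by
      rw [hCC]
      exact Finset.mem_image_of_mem (fun z : V × Bool => comp z.1 z.2)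
        (Finset.mem_product.mpr (⟨hu', Finset.mem_univ _⟩ : (u, true).1 ∈ Mf ∧ (u, true).2 ∈ Finset.univ))
    exact Finset.card_pos.mpr ⟨_, this⟩
  have hfinal : 2 * Mf.card + CC.card ≤ 2 * SWf.card := by
    have h1 : ∑ K ∈ CC, ((fib K).card + 1) ≤ ∑ K ∈ CC, 2 * (Tf K).card :=
      Finset.sum_le_sum hKmain
    rw [Finset.sum_add_distrib, Finset.sum_const, smul_eq_mul, mul_one, ← hcount,
      ← Finset.mul_sum] at h1
    calc 2 * Mf.card + CC.card = dom.card + CC.card := by rw [hdomcard]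
    _ ≤ 2 * ∑ K ∈ CC, (Tf K).card := h1
    _ ≤ 2 * SWf.card := by omega
  have hM : (U \ S).ncard = Mf.card := by
    rw [show (U \ S : Set V) = ↑Mf by ext x; simp [hMf], Set.ncard_coe_finset]
  have hSW : (S ∩ W).ncard = SWf.card := by
    rw [show (S ∩ W : Set V) = ↑SWf by ext x; simp [hSWf], Set.ncard_coe_finset]
  omega

end KeyLemma
section Helpers

variable {V : Type*} [Fintype V] {G : SimpleGraph V} {U W S : Set V}

/-- closed twins are impossible across distinct vertices of `W`. -/
lemma twins_open (hbip : BipartitionOf G U W) {x y : V} (hx : x ∈ W) (hy : y ∈ W)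
    (hxy : x ≠ y) (h : Twins G x y) : G.neighborSet x = G.neighborSet y := by
  rcases h with h | h
  · exact h
  · exfalso
    have hxmem : x ∈ G.neighborSet x ∪ {x} := Set.mem_union_right _ rfl
    rw [h] at hxmem
    rcases hxmem with h' | h'
    · exact hbip.not_mem_U hx (hbip.nbhd_W hy h')
    · exact hxy h'

lemma compl_dom_iff : IsDominating Gᶜ S ↔ ∀ v ∉ S, ∃ u ∈ S, u ≠ v ∧ ¬ G.Adj v u := by
  constructor
  · intro h v hv
    obtain ⟨u, hu, hadj⟩ := h v hv
    rw [G.compl_adj] at hadj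
    exact ⟨u, hu, fun he => hadj.1 he.symm, hadj.2⟩
  · intro h v hv
    obtain ⟨u, hu, hne, hnadj⟩ := h v hv
    exact ⟨u, hu, (G.compl_adj v u).mpr ⟨hne.symm, hnadj⟩⟩

lemma mixed_coDOM (hbip : BipartitionOf G U W) {u w : V}
    (hu : u ∈ S ∩ U) (hw : w ∈ S ∩ W) : IsDominating Gᶜ S := by
  rw [compl_dom_iff]
  intro v hv
  rcases hbip.mem_or v with hvU | hvW
  · refine ⟨u, hu.1, fun he => hv (he ▸ hu.1), ?_⟩
    exact hbip.2.2.1 v hvU u hu.2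
  · refine ⟨w, hw.1, fun he => hv (he ▸ hw.1), ?_⟩
    exact hbip.2.2.2 v hvW w hw.2

/-- if condition (i) holds, `U` is a locating-dominating set. -/
lemma U_isLD (hbip : BipartitionOf G U W) (hconn : G.Connected) (hV : 2 ≤ Fintype.card V)
    (hnt : ∀ w₁ ∈ W, ∀ w₂ ∈ W, w₁ ≠ w₂ → G.neighborSet w₁ ≠ G.neighborSet w₂) :
    IsLD G U := by
  constructor
  · intro x hx y hy hxy heq
    have hxW : x ∈ W := (hbip.mem_or x).resolve_left hx
    have hyW : y ∈ W := (hbip.mem_or y).resolve_left hy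
    rw [Set.inter_eq_self_of_subset_left (hbip.nbhd_W hxW),
      Set.inter_eq_self_of_subset_left (hbip.nbhd_W hyW)] at heq
    exact hnt x hxW y hyW hxy heq
  · intro v hv
    have hvW : v ∈ W := (hbip.mem_or v).resolve_left hv
    obtain ⟨z, hz⟩ := neighborSet_nonempty_of_connected hconn hV v
    exact ⟨z, hbip.nbhd_W hvW hz, hz⟩

/-- a minimum LD set contained in `U` equals `U`. -/
lemma sub_U_eq (hbip : BipartitionOf G U W) (hLD : IsLD G S) (hSU : S ⊆ U) : S = U := by
  refine Set.Subset.antisymm hSU (fun u hu => ?_)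
  by_contra huS
  obtain ⟨x, hxS, hadj⟩ := hLD.2 u huS
  exact hbip.2.2.1 u hu x (hSU hxS) hadj

/-- a minimum LD set contained in `W` equals `W`. -/
lemma sub_W_eq (hbip : BipartitionOf G U W) (hLD : IsLD G S) (hSW : S ⊆ W) : S = W := by
  refine Set.Subset.antisymm hSW (fun w hw => ?_)
  by_contra hwS
  obtain ⟨x, hxS, hadj⟩ := hLD.2 w hwS
  exact hbip.2.2.2 w hw x (hSW hxS) hadj

/-- the set of `w` that are a singleton difference of two `U`-neighbourhoods is small. -/
lemma label_bound (hUne : U.Nonempty) :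
    {w : V | ∃ u ∈ U, ∃ u' ∈ U, u ≠ u' ∧
      nvec G u - nvec G u' = Pi.single w (1 : ZMod 2)}.ncard + 1 ≤ U.ncard := by
  classical
  obtain ⟨u₀, hu₀⟩ := hUne
  set Dset : Set V := {w : V | ∃ u ∈ U, ∃ u' ∈ U, u ≠ u' ∧
      nvec G u - nvec G u' = Pi.single w (1 : ZMod 2)} with hDset
  set Uf : Finset V := Finset.univ.filter (fun u => u ∈ U) with hUf
  have hUfmem : ∀ u, u ∈ Uf ↔ u ∈ U := by intro u; simp [hUf]
  set Df : Finset V := Finset.univ.filter (fun w => w ∈ Dset) with hDf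
  set dvv : V → (V → ZMod 2) := fun u => nvec G u - nvec G u₀ with hdvv
  set genF : Finset (V → ZMod 2) := (Uf.erase u₀).image dvv with hgenF
  set D : Submodule (ZMod 2) (V → ZMod 2) := Submodule.span (ZMod 2) ↑genF with hD
  have hdvD : ∀ u ∈ U, dvv u ∈ D := by
    intro u hu
    by_cases huu : u = u₀
    · rw [huu]
      have : dvv u₀ = 0 := by rw [hdvv]; simp
      rw [this]; exact Submodule.zero_mem D
    · exact Submodule.subset_span (Finset.mem_coe.mpr
        (Finset.mem_image_of_mem dvv (Finset.mem_erase.mpr ⟨huu, (hUfmem u).mpr hu⟩)))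
  have hsingD : ∀ w ∈ Df, Pi.single w (1 : ZMod 2) ∈ D := by
    intro w hw
    obtain ⟨u, hu, u', hu', -, heq⟩ := (Finset.mem_filter.mp hw).2
    have : Pi.single w (1 : ZMod 2) = dvv u - dvv u' := by
      rw [hdvv, sub_sub_sub_cancel_right, heq]
    rw [this]
    exact Submodule.sub_mem D (hdvD u hu) (hdvD u' hu')
  set sgl : ↥Df → (V → ZMod 2) := fun w => Pi.single (w : V) (1 : ZMod 2) with hsgl
  have hsingind : LinearIndependent (ZMod 2) sgl := by
    have hb := (Pi.basisFun (ZMod 2) V).linearIndependent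
    have h2 := hb.comp (Subtype.val : ↥Df → V) Subtype.val_injective
    have : sgl = fun w : ↥Df => (Pi.basisFun (ZMod 2) V) w.val := by
      funext w; rw [hsgl, Pi.basisFun_apply]
    rw [this]
    exact h2
  have hLle : Df.card ≤ Module.finrank (ZMod 2) D := by
    have hsub : Submodule.span (ZMod 2) (Set.range sgl) ≤ D := by
      rw [Submodule.span_le]
      rintro v ⟨w, rfl⟩
      exact hsingD w.val w.property
    have := Submodule.finrank_mono hsub
    rwa [finrank_span_eq_card hsingind, Fintype.card_coe] at this
  have hDle : Module.finrank (ZMod 2) D ≤ (Uf.erase u₀).card := by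
    exact le_trans (finrank_span_finset_le_card genF) Finset.card_image_le
  have hUcard : (Uf.erase u₀).card = Uf.card - 1 :=
    Finset.card_erase_of_mem ((hUfmem u₀).mpr hu₀)
  have hU1 : 1 ≤ Uf.card := Finset.card_pos.mpr ⟨u₀, (hUfmem u₀).mpr hu₀⟩
  have hDn : Dset.ncard = Df.card := by
    rw [show Dset = ↑Df by ext x; simp [hDf], Set.ncard_coe_finset]
  have hUn : U.ncard = Uf.card := by
    rw [show U = ↑Uf by ext x; simp [hUf], Set.ncard_coe_finset]
  omega

end Helpers
section MainDirections

variable {V : Type*} [Fintype V] {G : SimpleGraph V} {U W : Set V}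

/-- conditions (i)-(iii) imply there is no complement-LD set of minimum size -/
lemma not_exists_coLD (hbip : BipartitionOf G U W) (hconn : G.Connected)
    {r s : ℕ} (hU : U.ncard = r) (hW : W.ncard = s) (h3 : 3 ≤ r) (hrs : r < s)
    (hi : ∀ w₁ ∈ W, ∀ w₂ ∈ W, w₁ ≠ w₂ → ¬ Twins G w₁ w₂)
    (hii : ∃ w ∈ W, G.neighborSet w = U)
    (hiii : ∀ u ∈ U, ∃ x₁ y₁ x₂ y₂ : V,
        x₁ ∈ W ∧ y₁ ∈ W ∧ x₂ ∈ W ∧ y₂ ∈ W ∧ x₁ ≠ y₁ ∧ x₂ ≠ y₂ ∧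
        TwinsAvoid G u x₁ y₁ ∧ TwinsAvoid G u x₂ y₂ ∧ ({x₁, y₁} : Set V) ≠ {x₂, y₂}) :
    ¬ ∃ S : Set V, S.ncard = ldNum G ∧ IsLD Gᶜ S := by
  rintro ⟨S, hcard, hdisC, hdomC⟩
  have hnt : ∀ w₁ ∈ W, ∀ w₂ ∈ W, w₁ ≠ w₂ → G.neighborSet w₁ ≠ G.neighborSet w₂ :=
    fun w₁ h1 w₂ h2 hne heq => hi w₁ h1 w₂ h2 hne (Or.inl heq)
  have hV2 : 2 ≤ Fintype.card V := by
    have := Set.ncard_le_ncard (Set.subset_univ U) (Set.toFinite _)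
    rw [Set.ncard_univ, Nat.card_eq_fintype_card] at this
    omega
  have hULD := U_isLD hbip hconn hV2 hnt
  have hlam : ldNum G ≤ r := hU ▸ ldNum_le hULD
  have hdisG : IsDistinguishing G S := isDistinguishing_compl_iff.mp hdisC
  by_cases hUS : U ⊆ S
  · have hSU : U = S := by
      refine Set.eq_of_subset_of_ncard_le hUS ?_ (Set.toFinite S)
      rw [hcard, hU]; exact hlam
    obtain ⟨wst, hwW, hwN⟩ := hii
    have hwS : wst ∉ S := by
      rw [← hSU]; exact hbip.not_mem_U hwW
    obtain ⟨u, huS, -, hnadj⟩ := compl_dom_iff.mp hdomC wst hwS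
    refine hnadj ?_
    have : u ∈ G.neighborSet wst := by rw [hwN, hSU]; exact huS
    exact this
  · have hkey := key_lemma hbip hnt hiii hdisG hUS
    have h1 : (U ∩ S).ncard + (U \ S).ncard = r := by
      rw [← hU]
      exact Set.ncard_inter_add_ncard_diff_eq_ncard U S (Set.toFinite U)
    have hSsplit : (S ∩ U) ∪ (S ∩ W) = S := by
      rw [← Set.inter_union_distrib_left, hbip.1, Set.inter_univ]
    have hdisjUW : Disjoint (S ∩ U) (S ∩ W) :=
      hbip.2.1.mono Set.inter_subset_right Set.inter_subset_right
    have h2 : (S ∩ U).ncard + (S ∩ W).ncard = S.ncard := by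
      rw [← Set.ncard_union_eq hdisjUW (Set.toFinite _) (Set.toFinite _), hSsplit]
    have h3' : (S ∩ U).ncard = (U ∩ S).ncard := by rw [Set.inter_comm]
    omega

/-- if one of the conditions fails, there is a complement-LD set of minimum size -/
lemma exists_coLD (hbip : BipartitionOf G U W) (hconn : G.Connected)
    {r s : ℕ} (hU : U.ncard = r) (hW : W.ncard = s) (h3 : 3 ≤ r) (hrs : r < s)
    (hcond : ¬ ((∀ w₁ ∈ W, ∀ w₂ ∈ W, w₁ ≠ w₂ → ¬ Twins G w₁ w₂) ∧
       (∃ w ∈ W, G.neighborSet w = U) ∧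
       (∀ u ∈ U, ∃ x₁ y₁ x₂ y₂ : V,
          x₁ ∈ W ∧ y₁ ∈ W ∧ x₂ ∈ W ∧ y₂ ∈ W ∧ x₁ ≠ y₁ ∧ x₂ ≠ y₂ ∧
          TwinsAvoid G u x₁ y₁ ∧ TwinsAvoid G u x₂ y₂ ∧
          ({x₁, y₁} : Set V) ≠ {x₂, y₂}))) :
    ∃ S : Set V, S.ncard = ldNum G ∧ IsLD Gᶜ S := by
  classical
  obtain ⟨S₀, hc₀, hLD₀⟩ := ldNum_spec G
  by_cases hmix : (S₀ ∩ U).Nonempty ∧ (S₀ ∩ W).Nonempty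
  · obtain ⟨⟨u, hu⟩, ⟨w, hw⟩⟩ := hmix
    exact ⟨S₀, hc₀, isDistinguishing_compl_iff.mpr hLD₀.1, mixed_coDOM hbip hu hw⟩
  rw [not_and_or] at hmix
  rcases hmix with hmix | hmix
  · -- S₀ ∩ U = ∅ : S₀ = W
    rw [Set.not_nonempty_iff_eq_empty] at hmix
    have hSW : S₀ ⊆ W := by
      intro x hx
      rcases hbip.mem_or x with hxU | hxW
      · exact absurd (Set.mem_inter hx hxU) (hmix ▸ Set.notMem_empty x)
      · exact hxW
    have hS₀ : S₀ = W := sub_W_eq hbip hLD₀ hSW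
    rw [hS₀] at hc₀ hLD₀
    by_cases hcd : IsDominating Gᶜ W
    · exact ⟨W, hc₀, isDistinguishing_compl_iff.mpr hLD₀.1, hcd⟩
    · rw [IsDominating] at hcd
      push_neg at hcd
      obtain ⟨v, hvW, hvbad⟩ := hcd
      have hvU : v ∈ U := (hbip.mem_or v).resolve_right hvW
      have hNv : G.neighborSet v = W := by
        refine Set.Subset.antisymm (hbip.nbhd_U hvU) (fun w hw => ?_)
        have := hvbad w hw
        rw [G.compl_adj] at this
        push_neg at this
        exact this (fun he => hvW (he ▸ hw))
      have hntU : ∀ u ∈ U, ∀ u' ∈ U, u ≠ u' → G.neighborSet u ≠ G.neighborSet u' := by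
        intro u hu u' hu' hne heq
        refine hLD₀.1 u (hbip.not_mem_W hu) u' (hbip.not_mem_W hu') hne ?_
        rw [Set.inter_eq_self_of_subset_left (hbip.nbhd_U hu),
          Set.inter_eq_self_of_subset_left (hbip.nbhd_U hu'), heq]
      set Dset : Set V := {w : V | ∃ u ∈ U, ∃ u' ∈ U, u ≠ u' ∧
          nvec G u - nvec G u' = Pi.single w (1 : ZMod 2)} with hDset
      have hUne : U.Nonempty := Set.nonempty_of_ncard_ne_zero (by rw [hU]; omega)
      have hDb := label_bound (G := G) hUne
      rw [← hDset] at hDb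
      have hWD : ¬ (W ⊆ Dset) := by
        intro hsub
        have := Set.ncard_le_ncard hsub (Set.toFinite _)
        rw [hW] at this
        omega
      obtain ⟨w₀, hw₀W, hw₀D⟩ := Set.not_subset.mp hWD
      set S' : Set V := insert v (W \ {w₀}) with hS'
      have hvnm : v ∉ W \ {w₀} := fun h => hvW h.1
      have hS'card : S'.ncard = ldNum G := by
        rw [hS', Set.ncard_insert_of_notMem hvnm (Set.toFinite _),
          Set.ncard_diff_singleton_of_mem hw₀W]
        omega
      have hout : ∀ a, a ∉ S' → a = w₀ ∨ (a ∈ U ∧ a ≠ v) := by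
        intro a ha
        rcases hbip.mem_or a with haU | haW
        · exact Or.inr ⟨haU, fun he => ha (he ▸ Set.mem_insert v _)⟩
        · left
          by_contra hne
          exact ha (Set.mem_insert_of_mem v ⟨haW, hne⟩)
      have ht1 : G.neighborSet w₀ ∩ S' = {v} := by
        ext z
        simp only [Set.mem_inter_iff, Set.mem_singleton_iff]
        constructor
        · rintro ⟨hz, hzS⟩
          have hzU : z ∈ U := hbip.nbhd_W hw₀W hz
          rcases hzS with h | h
          · exact h
          · exact absurd hzU (hbip.not_mem_U h.1)
        · intro hz
          rw [hz]
          have hadj : G.Adj v w₀ := by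
            have : w₀ ∈ G.neighborSet v := by rw [hNv]; exact hw₀W
            exact this
          exact ⟨hadj.symm, Set.mem_insert _ _⟩
      have ht2 : ∀ u ∈ U, u ≠ v → G.neighborSet u ∩ S' = G.neighborSet u \ {w₀} := by
        intro u huU hune
        ext z
        simp only [Set.mem_inter_iff, Set.mem_diff, Set.mem_singleton_iff]
        constructor
        · rintro ⟨hz, hzS⟩
          refine ⟨hz, ?_⟩
          have hzW : z ∈ W := hbip.nbhd_U huU hz
          rcases hzS with h | h
          · exact absurd hzW (hbip.not_mem_W (h ▸ hvU))
          · exact h.2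
        · rintro ⟨hz, hzw⟩
          have hzW : z ∈ W := hbip.nbhd_U huU hz
          exact ⟨hz, Set.mem_insert_of_mem v ⟨hzW, hzw⟩⟩
      have hdis' : IsDistinguishing G S' := by
        intro a ha b hb hab heq
        rcases hout a ha with ha0 | ⟨haU, hav⟩
        · rcases hout b hb with hb0 | ⟨hbU, hbv⟩
          · rw [ha0, hb0] at hab; exact hab rfl
          · rw [ha0, ht1, ht2 b hbU hbv] at heq
            have : v ∈ G.neighborSet b \ {w₀} := heq ▸ rfl
            exact hbip.not_mem_W (hvU) (hbip.nbhd_U hbU this.1)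
        · rcases hout b hb with hb0 | ⟨hbU, hbv⟩
          · rw [hb0, ht1, ht2 a haU hav] at heq
            have : v ∈ G.neighborSet a \ {w₀} := heq.symm ▸ rfl
            exact hbip.not_mem_W (hvU) (hbip.nbhd_U haU this.1)
          · rw [ht2 a haU hav, ht2 b hbU hbv] at heq
            refine hw₀D ?_
            rw [hDset]
            refine ⟨a, haU, b, hbU, hab, ?_⟩
            refine nvec_sub_eq_single (fun z hz => ?_) ?_
            · constructor
              · intro h
                have : z ∈ G.neighborSet a \ {w₀} := ⟨h, hz⟩
                rw [heq] at this; exact this.1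
              · intro h
                have : z ∈ G.neighborSet b \ {w₀} := ⟨h, hz⟩
                rw [← heq] at this; exact this.1
            · intro hiff
              refine hntU a haU b hbU hab ?_
              ext z
              by_cases hz : z = w₀
              · subst hz; exact hiff
              · constructor
                · intro h
                  have : z ∈ G.neighborSet a \ {w₀} := ⟨h, hz⟩
                  rw [heq] at this; exact this.1
                · intro h
                  have : z ∈ G.neighborSet b \ {w₀} := ⟨h, hz⟩
                  rw [← heq] at this; exact this.1
      have hW2 : (W \ {w₀}).Nonempty := by
        refine Set.nonempty_of_ncard_ne_zero ?_
        rw [Set.ncard_diff_singleton_of_mem hw₀W, hW]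
        omega
      obtain ⟨w₁, hw₁⟩ := hW2
      refine ⟨S', hS'card, isDistinguishing_compl_iff.mpr hdis', mixed_coDOM hbip
        (Set.mem_inter (Set.mem_insert v _) hvU)
        (Set.mem_inter (Set.mem_insert_of_mem v hw₁) hw₁.1)⟩
  · -- S₀ ∩ W = ∅ : S₀ = U
    rw [Set.not_nonempty_iff_eq_empty] at hmix
    have hSU : S₀ ⊆ U := by
      intro x hx
      rcases hbip.mem_or x with hxU | hxW
      · exact hxU
      · exact absurd (Set.mem_inter hx hxW) (hmix ▸ Set.notMem_empty x)
    have hS₀ : S₀ = U := sub_U_eq hbip hLD₀ hSU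
    rw [hS₀] at hc₀ hLD₀
    have hnt : ∀ w₁ ∈ W, ∀ w₂ ∈ W, w₁ ≠ w₂ → G.neighborSet w₁ ≠ G.neighborSet w₂ := by
      intro w₁ h1 w₂ h2 hne heq
      refine hLD₀.1 w₁ (hbip.not_mem_U h1) w₂ (hbip.not_mem_U h2) hne ?_
      rw [Set.inter_eq_self_of_subset_left (hbip.nbhd_W h1),
        Set.inter_eq_self_of_subset_left (hbip.nbhd_W h2), heq]
    have hi : ∀ w₁ ∈ W, ∀ w₂ ∈ W, w₁ ≠ w₂ → ¬ Twins G w₁ w₂ := by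
      intro w₁ h1 w₂ h2 hne htw
      exact hnt w₁ h1 w₂ h2 hne (twins_open hbip h1 h2 hne htw)
    rw [not_and_or] at hcond
    rcases hcond with hcond | hcond
    · exact absurd hi hcond
    rw [not_and_or] at hcond
    rcases hcond with hcond | hcond
    · -- ¬(ii) : U itself works
      refine ⟨U, hc₀, isDistinguishing_compl_iff.mpr hLD₀.1, ?_⟩
      rw [compl_dom_iff]
      intro v hv
      have hvW : v ∈ W := (hbip.mem_or v).resolve_left hv
      have hNvne : G.neighborSet v ≠ U := by
        intro h
        exact hcond ⟨v, hvW, h⟩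
      have hssub : G.neighborSet v ⊂ U := Set.ssubset_iff_subset_ne.mpr
        ⟨hbip.nbhd_W hvW, hNvne⟩
      obtain ⟨u, huU, hunb⟩ := Set.exists_of_ssubset hssub
      exact ⟨u, huU, fun he => hbip.not_mem_U hvW (he ▸ huU), fun hadj => hunb hadj⟩
    · -- ¬(iii)
      push_neg at hcond
      obtain ⟨u₀, hu₀U, hall⟩ := hcond
      have hall' : ∀ y z y' z' : V, y ∈ W → z ∈ W → y' ∈ W → z' ∈ W → y ≠ z → y' ≠ z' →
          TwinsAvoid G u₀ y z → TwinsAvoid G u₀ y' z' →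
          ({y, z} : Set V) = {y', z'} := by
        intro y z y' z' h1 h2 h3 h4 h5 h6 h7 h8
        have := hall y z y' z'
        tauto
      have hV2 : 2 ≤ Fintype.card V := by
        have := Set.ncard_le_ncard (Set.subset_univ U) (Set.toFinite _)
        rw [Set.ncard_univ, Nat.card_eq_fintype_card] at this
        omega
      -- choose x ∈ W adjacent to u₀ meeting every avoid pair
      have hxex : ∃ x, x ∈ W ∧ G.Adj u₀ x ∧
          (∀ w w', w ∈ W → w' ∈ W → w ≠ w' → TwinsAvoid G u₀ w w' → x = w ∨ x = w') := by
        by_cases hpair : ∃ y z, y ∈ W ∧ z ∈ W ∧ y ≠ z ∧ TwinsAvoid G u₀ y z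
        · obtain ⟨y, z, hyW, hzW, hyz, hTA⟩ := hpair
          obtain ⟨-, hxor⟩ := avoid_pair_props hbip hnt hu₀U hyW hzW hyz hTA
          obtain ⟨x, hxmem, hxadj⟩ : ∃ x, (x = y ∨ x = z) ∧ G.Adj x u₀ := by
            by_cases h : G.Adj y u₀
            · exact ⟨y, Or.inl rfl, h⟩
            · have : G.Adj z u₀ := by tauto
              exact ⟨z, Or.inr rfl, this⟩
          refine ⟨x, by rcases hxmem with rfl | rfl; exacts [hyW, hzW], hxadj.symm, ?_⟩
          intro w w' hwW hw'W hww' hTA'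
          have hseteq := hall' w w' y z hwW hw'W hyW hzW hww' hyz hTA' hTA
          have hxin : x ∈ ({y, z} : Set V) := by
            rcases hxmem with rfl | rfl
            · exact Set.mem_insert x _
            · exact Set.mem_insert_of_mem _ rfl
          rw [← hseteq] at hxin
          rcases hxin with h | h
          · exact Or.inl h
          · exact Or.inr (Set.mem_singleton_iff.mp h)
        · obtain ⟨x, hx⟩ := neighborSet_nonempty_of_connected hconn hV2 u₀
          refine ⟨x, hbip.nbhd_U hu₀U hx, hx, ?_⟩
          intro w w' hwW hw'W hww' hTA'
          exact absurd ⟨w, w', hwW, hw'W, hww', hTA'⟩ hpair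
      obtain ⟨x, hxW, hxadj, hxgood⟩ := hxex
      set S' : Set V := insert x (U \ {u₀}) with hS'
      have hxnm : x ∉ U \ {u₀} := fun h => hbip.not_mem_U hxW h.1
      have hS'card : S'.ncard = ldNum G := by
        rw [hS', Set.ncard_insert_of_notMem hxnm (Set.toFinite _),
          Set.ncard_diff_singleton_of_mem hu₀U, ← hc₀]
        have : 1 ≤ U.ncard := by rw [hU]; omega
        omega
      have hout : ∀ a, a ∉ S' → a = u₀ ∨ (a ∈ W ∧ a ≠ x) := by
        intro a ha
        rcases hbip.mem_or a with haU | haW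
        · left
          by_contra hne
          exact ha (Set.mem_insert_of_mem x ⟨haU, hne⟩)
        · exact Or.inr ⟨haW, fun he => ha (he ▸ Set.mem_insert x _)⟩
      have ht1 : G.neighborSet u₀ ∩ S' = {x} := by
        ext z
        simp only [Set.mem_inter_iff, Set.mem_singleton_iff]
        constructor
        · rintro ⟨hz, hzS⟩
          have hzW : z ∈ W := hbip.nbhd_U hu₀U hz
          rcases hzS with h | h
          · exact h
          · exact absurd hzW (hbip.not_mem_W h.1)
        · intro hz
          rw [hz]
          exact ⟨hxadj, Set.mem_insert _ _⟩
      have ht2 : ∀ w ∈ W, w ≠ x → G.neighborSet w ∩ S' = G.neighborSet w \ {u₀} := by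
        intro w hwW hwx
        ext z
        simp only [Set.mem_inter_iff, Set.mem_diff, Set.mem_singleton_iff]
        constructor
        · rintro ⟨hz, hzS⟩
          refine ⟨hz, ?_⟩
          have hzU : z ∈ U := hbip.nbhd_W hwW hz
          rcases hzS with h | h
          · exact absurd hzU (hbip.not_mem_U (h ▸ hxW))
          · exact h.2
        · rintro ⟨hz, hzu⟩
          have hzU : z ∈ U := hbip.nbhd_W hwW hz
          exact ⟨hz, Set.mem_insert_of_mem x ⟨hzU, hzu⟩⟩
      have hdis' : IsDistinguishing G S' := by
        intro a ha b hb hab heq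
        rcases hout a ha with ha0 | ⟨haW, hax⟩
        · rcases hout b hb with hb0 | ⟨hbW, hbx⟩
          · rw [ha0, hb0] at hab; exact hab rfl
          · rw [ha0, ht1, ht2 b hbW hbx] at heq
            have : x ∈ G.neighborSet b \ {u₀} := heq ▸ rfl
            exact hbip.not_mem_U hxW (hbip.nbhd_W hbW this.1)
        · rcases hout b hb with hb0 | ⟨hbW, hbx⟩
          · rw [hb0, ht1, ht2 a haW hax] at heq
            have : x ∈ G.neighborSet a \ {u₀} := heq.symm ▸ rfl
            exact hbip.not_mem_U hxW (hbip.nbhd_W haW this.1)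
          · rw [ht2 a haW hax, ht2 b hbW hbx] at heq
            rcases hxgood a b haW hbW hab (Or.inl heq) with h | h
            · exact hax h.symm
            · exact hbx h.symm
      have hU2 : (U \ {u₀}).Nonempty := by
        refine Set.nonempty_of_ncard_ne_zero ?_
        rw [Set.ncard_diff_singleton_of_mem hu₀U, hU]
        omega
      obtain ⟨u₁, hu₁⟩ := hU2
      refine ⟨S', hS'card, isDistinguishing_compl_iff.mpr hdis', mixed_coDOM hbip
        (Set.mem_inter (Set.mem_insert_of_mem x hu₁) hu₁.1)
        (Set.mem_inter (Set.mem_insert x _) hxW)⟩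

end MainDirections


theorem ldNum_compl_eq_succ_iff [Fintype V] (G : SimpleGraph V) (U W : Set V)
    (hbip : BipartitionOf G U W) (hconn : G.Connected) (r s : ℕ)
    (hU : U.ncard = r) (hW : W.ncard = s) (h3 : 3 ≤ r) (hrs : r < s) :
    ldNum Gᶜ = ldNum G + 1 ↔
      ((∀ w₁ ∈ W, ∀ w₂ ∈ W, w₁ ≠ w₂ → ¬ Twins G w₁ w₂) ∧
       (∃ w ∈ W, G.neighborSet w = U) ∧
       (∀ u ∈ U, ∃ x₁ y₁ x₂ y₂ : V,
          x₁ ∈ W ∧ y₁ ∈ W ∧ x₂ ∈ W ∧ y₂ ∈ W ∧ x₁ ≠ y₁ ∧ x₂ ≠ y₂ ∧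
          TwinsAvoid G u x₁ y₁ ∧ TwinsAvoid G u x₂ y₂ ∧
          ({x₁, y₁} : Set V) ≠ {x₂, y₂})) := by
  rw [main_reduction G]
  constructor
  · intro hno
    by_contra hcond
    exact hno (exists_coLD hbip hconn hU hW h3 hrs hcond)
  · rintro ⟨hi, hii, hiii⟩
    exact not_exists_coLD hbip hconn hU hW h3 hrs hi hii hiii

end
end
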